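/- Assume good X, good Y₁ and good Y₂. Then substitution of the same variable (at the same varsort) distributes over itself: X[Y₁/y]_ys[Y₂/y]_ys = X[(Y₁[Y₂/y]_ys)/y]_ys. -/

import Mathlib

open scoped Classical

universe u

section Binding

variable (var varsort index bindex opsym : Type u)

/-! ### Inputs -/

/-- An `(α,β)`-input: a partial function from `α` to `β`. -/
abbrev Input (α β : Type u) : Type u := α → Option β

/-- The domain of an input. -/
def idom {α β : Type u} (inp : Input α β) : Set α := {a | inp a ≠ none}

/-- The componentwise lifting of a predicate to inputs. -/
def liftP {α β : Type u} (P : β → Prop) (inp : Input α β) : Prop :=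
  ∀ a b, inp a = some b → P b

/-- The componentwise lifting of a function to inputs. -/
def liftF {α β γ : Type u} (f : β → γ) (inp : Input α β) : Input α γ :=
  fun a => (inp a).map f

/-- An input is small if its domain has cardinality smaller than that of `var`. -/
def smallDom {α β : Type u} (inp : Input α β) : Prop :=
  Cardinal.mk (idom inp) < Cardinal.mk var

/-! ### Quasiterms -/

mutual
/-- Quasiterms: raw terms before quotienting by alpha-equivalence. -/
inductive QTerm : Type u where
  | qVar : varsort → var → QTerm
  | qOp : opsym → (index → Option QTerm) → (bindex → Option QAbs) → QTerm
/-- Quasiabstractions. -/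
inductive QAbs : Type u where
  | qAbs : varsort → var → QTerm → QAbs
end

/-- Transposition of two variables. -/
noncomputable def swapVar (z1 z2 x : var) : var :=
  if x = z1 then z2 else if x = z2 then z1 else x

/-- Sort-aware transposition of variables (acts only on variables of varsort `zs`). -/
noncomputable def swapVarS (zs xs : varsort) (z1 z2 x : var) : var :=
  if xs = zs then swapVar var z1 z2 x else x

variable {var varsort index bindex opsym}

/-- Swapping of the variables `z1`, `z2` at varsort `zs` in a quasiterm
(transposing them everywhere, including binding positions). -/
noncomputable def qSwap (z1 z2 : var) (zs : varsort) :
    QTerm var varsort index bindex opsym → QTerm var varsort index bindex opsym :=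
  QTerm.rec (motive_1 := fun _ => QTerm var varsort index bindex opsym)
    (motive_2 := fun _ => QAbs var varsort index bindex opsym)
    (motive_3 := fun _ => Option (QTerm var varsort index bindex opsym))
    (motive_4 := fun _ => Option (QAbs var varsort index bindex opsym))
    (fun xs x => .qVar xs (swapVarS var varsort zs xs z1 z2 x))
    (fun d _ _ rinp rbinp => .qOp d rinp rbinp)
    (fun xs x _ rX => .qAbs xs (swapVarS var varsort zs xs z1 z2 x) rX)
    none (fun _ r => some r) none (fun _ r => some r)

/-- Swapping of variables in a quasiabstraction. -/
noncomputable def qSwapAbs (z1 z2 : var) (zs : varsort) :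
    QAbs var varsort index bindex opsym → QAbs var varsort index bindex opsym
  | .qAbs xs x X => .qAbs xs (swapVarS var varsort zs xs z1 z2 x) (qSwap z1 z2 zs X)

/-! ### Freshness and goodness -/

mutual
/-- `QFresh ys y X`: the variable `y` of varsort `ys` has no free occurrence in `X`. -/
inductive QFresh : varsort → var → QTerm var varsort index bindex opsym → Prop where
  | qVar : ∀ {ys y xs x}, (ys, y) ≠ (xs, x) → QFresh ys y (.qVar xs x)
  | qOp : ∀ {ys y d inp binp}, (∀ i X, inp i = some X → QFresh ys y X) →
      (∀ j A, binp j = some A → QFreshAbs ys y A) → QFresh ys y (.qOp d inp binp)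
/-- Freshness for quasiabstractions. -/
inductive QFreshAbs : varsort → var → QAbs var varsort index bindex opsym → Prop where
  | qAbs_bound : ∀ {xs x X}, QFreshAbs xs x (.qAbs xs x X)
  | qAbs_body : ∀ {ys y xs x X}, QFresh ys y X → QFreshAbs ys y (.qAbs xs x X)
end

mutual
/-- Good quasiterms: all constructors branch less than `|var|`. -/
inductive QGood : QTerm var varsort index bindex opsym → Prop where
  | qVar : ∀ {xs x}, QGood (.qVar xs x)
  | qOp : ∀ {d inp binp}, (∀ i X, inp i = some X → QGood X) →
      (∀ j A, binp j = some A → QGoodAbs A) →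
      smallDom var inp → smallDom var binp → QGood (.qOp d inp binp)
/-- Good quasiabstractions. -/
inductive QGoodAbs : QAbs var varsort index bindex opsym → Prop where
  | qAbs : ∀ {xs x X}, QGood X → QGoodAbs (.qAbs xs x X)
end

/-! ### Alpha-equivalence -/

mutual
/-- Alpha-equivalence of quasiterms. -/
inductive Alpha : QTerm var varsort index bindex opsym →
    QTerm var varsort index bindex opsym → Prop where
  | qVar : ∀ {xs x}, Alpha (.qVar xs x) (.qVar xs x)
  | qOp : ∀ {d inp binp inp' binp'},
      (∀ i, inp i = none ↔ inp' i = none) →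
      (∀ i X X', inp i = some X → inp' i = some X' → Alpha X X') →
      (∀ j, binp j = none ↔ binp' j = none) →
      (∀ j A A', binp j = some A → binp' j = some A' → AlphaAbs A A') →
      Alpha (.qOp d inp binp) (.qOp d inp' binp')
/-- Alpha-equivalence of quasiabstractions (the exists-fresh formulation). -/
inductive AlphaAbs : QAbs var varsort index bindex opsym →
    QAbs var varsort index bindex opsym → Prop where
  | qAbs : ∀ {xs x x' X X' y}, y ∉ ({x, x'} : Set var) →
      QFresh xs y X → QFresh xs y X' →
      Alpha (qSwap y x xs X) (qSwap y x' xs X') →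
      AlphaAbs (.qAbs xs x X) (.qAbs xs x' X')
end

/-! ### Terms and abstractions as quotients -/

variable (var varsort index bindex opsym)

/-- Terms: quasiterms modulo alpha-equivalence. -/
def Term : Type u := Quot (@Alpha var varsort index bindex opsym)

/-- Abstractions: quasiabstractions modulo alpha-equivalence. -/
def Abstr : Type u := Quot (@AlphaAbs var varsort index bindex opsym)

variable {var varsort index bindex opsym}

/-- The projection from quasiterms to terms. -/
def tmk : QTerm var varsort index bindex opsym → Term var varsort index bindex opsym :=
  Quot.mk _

/-- The projection from quasiabstractions to abstractions. -/
def amk : QAbs var varsort index bindex opsym → Abstr var varsort index bindex opsym :=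
  Quot.mk _

/-- A representative of a term. -/
noncomputable def trep (X : Term var varsort index bindex opsym) :
    QTerm var varsort index bindex opsym := Quot.out X

/-- A representative of an abstraction. -/
noncomputable def arep (A : Abstr var varsort index bindex opsym) :
    QAbs var varsort index bindex opsym := Quot.out A

/-- Good terms. -/
def good (X : Term var varsort index bindex opsym) : Prop := QGood (trep X)

/-- Good abstractions. -/
def goodAbs (A : Abstr var varsort index bindex opsym) : Prop := QGoodAbs (arep A)

/-- The variable-injection constructor on terms. -/
def Var (xs : varsort) (x : var) : Term var varsort index bindex opsym :=
  tmk (.qVar xs x)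

/-- The operation constructor on terms. -/
noncomputable def Op (d : opsym) (inp : Input index (Term var varsort index bindex opsym))
    (binp : Input bindex (Abstr var varsort index bindex opsym)) :
    Term var varsort index bindex opsym :=
  tmk (.qOp d (liftF trep inp) (liftF arep binp))

/-- The abstraction constructor. -/
noncomputable def Abs (xs : varsort) (x : var) (X : Term var varsort index bindex opsym) :
    Abstr var varsort index bindex opsym :=
  amk (.qAbs xs x (trep X))

/-- Freshness on terms. -/
def fresh (ys : varsort) (y : var) (X : Term var varsort index bindex opsym) : Prop :=
  QFresh ys y (trep X)

/-- Freshness on abstractions. -/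
def freshAbs (ys : varsort) (y : var) (A : Abstr var varsort index bindex opsym) : Prop :=
  QFreshAbs ys y (arep A)

/-- Swapping on terms. -/
noncomputable def tswap (X : Term var varsort index bindex opsym)
    (z1 z2 : var) (zs : varsort) : Term var varsort index bindex opsym :=
  tmk (qSwap z1 z2 zs (trep X))

/-! ### Substitution -/

mutual
/-- The graph of capture-avoiding substitution on quasiterms:
`QSubst X Y y ys Z` means that `Z` is a result of substituting `Y` for the free
occurrences of the variable `y` of varsort `ys` in `X` (along a capture-free
representative). -/
inductive QSubst : QTerm var varsort index bindex opsym →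
    QTerm var varsort index bindex opsym → var → varsort →
    QTerm var varsort index bindex opsym → Prop where
  | var_eq : ∀ {Y y ys}, QSubst (.qVar ys y) Y y ys Y
  | var_ne : ∀ {Y y ys xs x}, (xs, x) ≠ (ys, y) → QSubst (.qVar xs x) Y y ys (.qVar xs x)
  | op : ∀ {Y y ys d inp binp inp' binp'},
      (∀ i, inp i = none ↔ inp' i = none) →
      (∀ i X X', inp i = some X → inp' i = some X' → QSubst X Y y ys X') →
      (∀ j, binp j = none ↔ binp' j = none) →
      (∀ j A A', binp j = some A → binp' j = some A' → QSubstAbs A Y y ys A') →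
      QSubst (.qOp d inp binp) Y y ys (.qOp d inp' binp')
/-- The graph of capture-avoiding substitution on quasiabstractions. -/
inductive QSubstAbs : QAbs var varsort index bindex opsym →
    QTerm var varsort index bindex opsym → var → varsort →
    QAbs var varsort index bindex opsym → Prop where
  | abs : ∀ {Y y ys xs x X X'}, (xs, x) ≠ (ys, y) → QFresh xs x Y →
      QSubst X Y y ys X' → QSubstAbs (.qAbs xs x X) Y y ys (.qAbs xs x X')
end

/-- The graph of capture-avoiding substitution on terms. -/
def SubstRel (X Y : Term var varsort index bindex opsym) (y : var) (ys : varsort)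
    (Z : Term var varsort index bindex opsym) : Prop :=
  ∃ qX qZ, tmk qX = X ∧ tmk qZ = Z ∧ QSubst qX (trep Y) y ys qZ

/-- Capture-avoiding substitution on terms: `subst X Y y ys` is `X[Y/y]_ys`. -/
noncomputable def subst (X Y : Term var varsort index bindex opsym)
    (y : var) (ys : varsort) : Term var varsort index bindex opsym :=
  if h : ∃ Z, SubstRel X Y y ys Z then h.choose else X

/-- The graph of capture-avoiding substitution on abstractions. -/
def SubstAbsRel (A : Abstr var varsort index bindex opsym)
    (Y : Term var varsort index bindex opsym) (y : var) (ys : varsort)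
    (B : Abstr var varsort index bindex opsym) : Prop :=
  ∃ qA qB, amk qA = A ∧ amk qB = B ∧ QSubstAbs qA (trep Y) y ys qB

/-- Capture-avoiding substitution on abstractions: `substAbs A Y y ys` is `A[Y/y]_ys`. -/
noncomputable def substAbs (A : Abstr var varsort index bindex opsym)
    (Y : Term var varsort index bindex opsym) (y : var) (ys : varsort) :
    Abstr var varsort index bindex opsym :=
  if h : ∃ B, SubstAbsRel A Y y ys B then h.choose else A

/-! ### Parallel substitution -/

mutual
/-- The graph of capture-avoiding parallel substitution on quasiterms, along an
assignment `ρ : varsort → var → Option qterm`. -/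
inductive QPSubst : QTerm var varsort index bindex opsym →
    (varsort → var → Option (QTerm var varsort index bindex opsym)) →
    QTerm var varsort index bindex opsym → Prop where
  | var_some : ∀ {ρ xs x Y}, ρ xs x = some Y → QPSubst (.qVar xs x) ρ Y
  | var_none : ∀ {ρ xs x}, ρ xs x = none → QPSubst (.qVar xs x) ρ (.qVar xs x)
  | op : ∀ {ρ d inp binp inp' binp'},
      (∀ i, inp i = none ↔ inp' i = none) →
      (∀ i X X', inp i = some X → inp' i = some X' → QPSubst X ρ X') →
      (∀ j, binp j = none ↔ binp' j = none) →
      (∀ j A A', binp j = some A → binp' j = some A' → QPSubstAbs A ρ A') →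
      QPSubst (.qOp d inp binp) ρ (.qOp d inp' binp')
/-- The graph of capture-avoiding parallel substitution on quasiabstractions. -/
inductive QPSubstAbs : QAbs var varsort index bindex opsym →
    (varsort → var → Option (QTerm var varsort index bindex opsym)) →
    QAbs var varsort index bindex opsym → Prop where
  | abs : ∀ {ρ xs x X X'}, ρ xs x = none →
      (∀ ys y Y, ρ ys y = some Y → QFresh xs x Y) →
      QPSubst X ρ X' → QPSubstAbs (.qAbs xs x X) ρ (.qAbs xs x X')
end

/-- Turning a term-valued assignment into a quasiterm-valued one, by picking
representatives. -/
noncomputable def qassign (ρ : varsort → var → Option (Term var varsort index bindex opsym)) :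
    varsort → var → Option (QTerm var varsort index bindex opsym) :=
  fun xs x => (ρ xs x).map trep

/-- The graph of parallel substitution on terms. -/
def PSubstRel (X : Term var varsort index bindex opsym)
    (ρ : varsort → var → Option (Term var varsort index bindex opsym))
    (Z : Term var varsort index bindex opsym) : Prop :=
  ∃ qX qZ, tmk qX = X ∧ tmk qZ = Z ∧ QPSubst qX (qassign ρ) qZ

/-- Capture-avoiding parallel substitution on terms: `psubst X ρ` is `X[ρ]`. -/
noncomputable def psubst (X : Term var varsort index bindex opsym)
    (ρ : varsort → var → Option (Term var varsort index bindex opsym)) :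
    Term var varsort index bindex opsym :=
  if h : ∃ Z, PSubstRel X ρ Z then h.choose else X

/-- The graph of parallel substitution on abstractions. -/
def PSubstAbsRel (A : Abstr var varsort index bindex opsym)
    (ρ : varsort → var → Option (Term var varsort index bindex opsym))
    (B : Abstr var varsort index bindex opsym) : Prop :=
  ∃ qA qB, amk qA = A ∧ amk qB = B ∧ QPSubstAbs qA (qassign ρ) qB

/-- Capture-avoiding parallel substitution on abstractions. -/
noncomputable def psubstAbs (A : Abstr var varsort index bindex opsym)
    (ρ : varsort → var → Option (Term var varsort index bindex opsym)) :
    Abstr var varsort index bindex opsym :=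
  if h : ∃ B, PSubstAbsRel A ρ B then h.choose else A


/-! ### De Bruijn representation -/

inductive DBT (V VS I BI O : Type u) : Type u where
  | dNone
  | dFree (xs : VS) (x : V)
  | dBound (n : ULift.{u} ℕ)
  | dOp (d : O) (inp : I → DBT V VS I BI O) (binp : BI → DBT V VS I BI O)
  | dAbs (xs : VS) (t : DBT V VS I BI O)

namespace DBT
variable {V VS I BI O : Type u}

noncomputable def dmapFree (f : VS → V → V) : DBT V VS I BI O → DBT V VS I BI O
  | .dNone => .dNone
  | .dFree xs x => .dFree xs (f xs x)
  | .dBound n => .dBound n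
  | .dOp d inp binp => .dOp d (fun i => dmapFree f (inp i)) (fun j => dmapFree f (binp j))
  | .dAbs xs t => .dAbs xs (dmapFree f t)

noncomputable def dclose (p : VS × V) (k : ℕ) : DBT V VS I BI O → DBT V VS I BI O
  | .dNone => .dNone
  | .dFree xs x => if (xs, x) = p then .dBound (.up k) else .dFree xs x
  | .dBound n => if k ≤ n.down then .dBound (.up (n.down + 1)) else .dBound n
  | .dOp d inp binp => .dOp d (fun i => dclose p k (inp i)) (fun j => dclose p k (binp j))
  | .dAbs xs t => .dAbs xs (dclose p (k+1) t)

noncomputable def dopen (p : VS × V) (k : ℕ) : DBT V VS I BI O → DBT V VS I BI O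
  | .dNone => .dNone
  | .dFree xs x => .dFree xs x
  | .dBound n => if n.down = k then .dFree p.1 p.2 else
      if k < n.down then .dBound (.up (n.down - 1)) else .dBound n
  | .dOp d inp binp => .dOp d (fun i => dopen p k (inp i)) (fun j => dopen p k (binp j))
  | .dAbs xs t => .dAbs xs (dopen p (k+1) t)

noncomputable def dFVd : DBT V VS I BI O → Set (VS × V)
  | .dNone => ∅
  | .dFree xs x => {(xs, x)}
  | .dBound _ => ∅
  | .dOp _ inp binp => (⋃ i, dFVd (inp i)) ∪ ⋃ j, dFVd (binp j)
  | .dAbs _ t => dFVd t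

noncomputable def dsubst (ys : VS) (y : V) (T : DBT V VS I BI O) :
    DBT V VS I BI O → DBT V VS I BI O
  | .dNone => .dNone
  | .dFree xs x => if (xs, x) = (ys, y) then T else .dFree xs x
  | .dBound n => .dBound n
  | .dOp d inp binp => .dOp d (fun i => dsubst ys y T (inp i)) (fun j => dsubst ys y T (binp j))
  | .dAbs xs t => .dAbs xs (dsubst ys y T t)

theorem dsubst_dsubst_same (ys : VS) (y : V) (T₁ T₂ : DBT V VS I BI O) (t : DBT V VS I BI O) :
    dsubst ys y T₂ (dsubst ys y T₁ t) = dsubst ys y (dsubst ys y T₂ T₁) t := by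
  induction t with
  | dNone => rfl
  | dFree xs x => by_cases h : (xs, x) = (ys, y) <;> simp [dsubst, h]
  | dBound n => rfl
  | dOp d inp binp ih1 ih2 => simp only [dsubst]; exact congrArg₂ _ (funext ih1) (funext ih2)
  | dAbs xs t ih => simp only [dsubst]; rw [ih]

theorem dopen_dclose (p : VS × V) (k : ℕ) (t : DBT V VS I BI O) :
    dopen p k (dclose p k t) = t := by
  induction t generalizing k with
  | dNone => rfl
  | dFree xs x =>
      by_cases h : (xs, x) = p
      · subst h; simp [dclose, dopen]
      · simp [dclose, dopen, h]
  | dBound n =>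
      by_cases h : k ≤ n.down
      · have h1 : ¬ (n.down + 1 = k) := by omega
        have h2 : k < n.down + 1 := by omega
        simp [dclose, dopen, h, h1, h2]
      · have h1 : ¬ (n.down = k) := by omega
        have h2 : ¬ (k < n.down) := by omega
        simp [dclose, dopen, h, h1, h2]
  | dOp d inp binp ih1 ih2 => simp only [dclose, dopen]; exact congrArg₂ _ (funext fun i => ih1 i k) (funext fun j => ih2 j k)
  | dAbs xs t ih => simp only [dclose, dopen]; rw [ih]

theorem dmapFree_congr {f g : VS → V → V} (t : DBT V VS I BI O)
    (h : ∀ p ∈ dFVd t, f p.1 p.2 = g p.1 p.2) : dmapFree f t = dmapFree g t := by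
  induction t with
  | dNone => rfl
  | dFree xs x => simp only [dmapFree]; rw [h (xs, x) rfl]
  | dBound n => rfl
  | dOp d inp binp ih1 ih2 =>
      simp only [dmapFree]
      refine congrArg₂ _ (funext fun i => ih1 i fun p hp => h p ?_)
        (funext fun j => ih2 j fun p hp => h p ?_)
      · exact Set.mem_union_left _ (Set.mem_iUnion.2 ⟨i, hp⟩)
      · exact Set.mem_union_right _ (Set.mem_iUnion.2 ⟨j, hp⟩)
  | dAbs xs t ih => simp only [dmapFree]; rw [ih fun p hp => h p hp]

theorem dmapFree_eq_self {f : VS → V → V} (t : DBT V VS I BI O)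
    (h : ∀ p ∈ dFVd t, f p.1 p.2 = p.2) : dmapFree f t = t := by
  induction t with
  | dNone => rfl
  | dFree xs x => simp only [dmapFree]; rw [h (xs, x) rfl]
  | dBound n => rfl
  | dOp d inp binp ih1 ih2 =>
      simp only [dmapFree]
      refine congrArg₂ _ (funext fun i => ih1 i fun p hp => h p ?_)
        (funext fun j => ih2 j fun p hp => h p ?_)
      · exact Set.mem_union_left _ (Set.mem_iUnion.2 ⟨i, hp⟩)
      · exact Set.mem_union_right _ (Set.mem_iUnion.2 ⟨j, hp⟩)
  | dAbs xs t ih => simp only [dmapFree]; rw [ih fun p hp => h p hp]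

theorem dmapFree_dclose {f : VS → V → V} (hf : ∀ s a b, f s a = f s b → a = b)
    (p : VS × V) (k : ℕ) (t : DBT V VS I BI O) :
    dmapFree f (dclose p k t) = dclose (p.1, f p.1 p.2) k (dmapFree f t) := by
  induction t generalizing k with
  | dNone => rfl
  | dFree xs x =>
      by_cases h : (xs, x) = p
      · obtain ⟨h1, h2⟩ := Prod.mk.injEq .. ▸ h
        subst h1; subst h2
        simp [dclose, dmapFree]
      · have h' : (xs, f xs x) ≠ (p.1, f p.1 p.2) := by
          intro hc
          obtain ⟨h1, h2⟩ := Prod.mk.injEq .. ▸ hc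
          subst h1
          exact h (by rw [hf _ _ _ h2])
        simp [dclose, dmapFree, h, h']
  | dBound n => by_cases h : k ≤ n.down <;> simp [dclose, dmapFree, h]
  | dOp d inp binp ih1 ih2 => simp only [dclose, dmapFree]; exact congrArg₂ _ (funext fun i => ih1 i k) (funext fun j => ih2 j k)
  | dAbs xs t ih => simp only [dclose, dmapFree]; rw [ih]

theorem dmapFree_dopen {f : VS → V → V} (p : VS × V) (k : ℕ) (t : DBT V VS I BI O) :
    dmapFree f (dopen p k t) = dopen (p.1, f p.1 p.2) k (dmapFree f t) := by
  induction t generalizing k with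
  | dNone => rfl
  | dFree xs x => simp [dopen, dmapFree]
  | dBound n =>
      by_cases h : n.down = k
      · simp [dopen, dmapFree, h]
      · by_cases h' : k < n.down <;> simp [dopen, dmapFree, h, h']
  | dOp d inp binp ih1 ih2 => simp only [dopen, dmapFree]; exact congrArg₂ _ (funext fun i => ih1 i k) (funext fun j => ih2 j k)
  | dAbs xs t ih => simp only [dopen, dmapFree]; rw [ih]

theorem dFVd_dclose (p : VS × V) (k : ℕ) (t : DBT V VS I BI O) :
    dFVd (dclose p k t) ⊆ dFVd t \ {p} := by
  induction t generalizing k with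
  | dNone => simp [dclose, dFVd]
  | dFree xs x =>
      by_cases h : (xs, x) = p
      · simp [dclose, dFVd, h]
      · simp only [dclose, if_neg h, dFVd]
        intro q hq; rcases hq with rfl; exact ⟨rfl, h⟩
  | dBound n => by_cases h : k ≤ n.down <;> simp [dclose, dFVd, h]
  | dOp d inp binp ih1 ih2 =>
      simp only [dclose, dFVd]
      intro q hq
      rcases hq with hq | hq
      · obtain ⟨i, hi⟩ := Set.mem_iUnion.1 hq
        have := ih1 i k hi
        exact ⟨Set.mem_union_left _ (Set.mem_iUnion.2 ⟨i, this.1⟩), this.2⟩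
      · obtain ⟨j, hj⟩ := Set.mem_iUnion.1 hq
        have := ih2 j k hj
        exact ⟨Set.mem_union_right _ (Set.mem_iUnion.2 ⟨j, this.1⟩), this.2⟩
  | dAbs xs t ih => exact ih (k+1)

theorem dsubst_of_ne (ys : VS) (y : V) (T : DBT V VS I BI O) (t : DBT V VS I BI O)
    (h : (ys, y) ∉ dFVd t) : dsubst ys y T t = t := by
  induction t with
  | dNone => rfl
  | dFree xs x =>
      have : (xs, x) ≠ (ys, y) := by
        intro hc; exact h (by simp [dFVd, hc])
      simp [dsubst, this]
  | dBound n => rfl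
  | dOp d inp binp ih1 ih2 =>
      simp only [dsubst]
      refine congrArg₂ _ (funext fun i => ih1 i fun hp => h ?_)
        (funext fun j => ih2 j fun hp => h ?_)
      · exact Set.mem_union_left _ (Set.mem_iUnion.2 ⟨i, hp⟩)
      · exact Set.mem_union_right _ (Set.mem_iUnion.2 ⟨j, hp⟩)
  | dAbs xs t ih => simp only [dsubst]; rw [ih fun hp => h hp]

end DBT

/-! ### Translation of quasiterms to the de Bruijn representation -/

open DBT

/-- Lookup of a variable in a binder context. -/
noncomputable def lookupCtx (xs : varsort) (x : var) :
    List (varsort × var) → ℕ → DBT var varsort index bindex opsym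
  | [], _ => .dFree xs x
  | p :: ctx, n => if p = (xs, x) then .dBound (.up n) else lookupCtx xs x ctx (n+1)

/-- The de Bruijn translation of a quasiterm, relative to a binder context. -/
noncomputable def db : QTerm var varsort index bindex opsym →
    List (varsort × var) → DBT var varsort index bindex opsym :=
  QTerm.rec (motive_1 := fun _ => List (varsort × var) → DBT var varsort index bindex opsym)
    (motive_2 := fun _ => List (varsort × var) → DBT var varsort index bindex opsym)
    (motive_3 := fun _ => List (varsort × var) → DBT var varsort index bindex opsym)
    (motive_4 := fun _ => List (varsort × var) → DBT var varsort index bindex opsym)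
    (fun xs x ctx => lookupCtx xs x ctx 0)
    (fun d _ _ rinp rbinp ctx => .dOp d (fun i => rinp i ctx) (fun j => rbinp j ctx))
    (fun xs x _ rX ctx => .dAbs xs (rX ((xs, x) :: ctx)))
    (fun _ => .dNone) (fun _ r => r) (fun _ => .dNone) (fun _ r => r)

/-- The de Bruijn translation of a quasiabstraction. -/
noncomputable def dbA : QAbs var varsort index bindex opsym →
    List (varsort × var) → DBT var varsort index bindex opsym
  | .qAbs xs x X, ctx => .dAbs xs (db X ((xs, x) :: ctx))

/-- db on an optional quasiterm. -/
noncomputable def dbo : Option (QTerm var varsort index bindex opsym) →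
    List (varsort × var) → DBT var varsort index bindex opsym
  | none, _ => .dNone
  | some X, ctx => db X ctx

/-- dbA on an optional quasiabstraction. -/
noncomputable def dbao : Option (QAbs var varsort index bindex opsym) →
    List (varsort × var) → DBT var varsort index bindex opsym
  | none, _ => .dNone
  | some A, ctx => dbA A ctx

@[simp] theorem db_qVar (xs : varsort) (x : var) (ctx : List (varsort × var)) :
    db (QTerm.qVar (index := index) (bindex := bindex) (opsym := opsym) xs x) ctx
      = lookupCtx xs x ctx 0 := rfl

theorem db_qOp (d : opsym) (inp : index → Option (QTerm var varsort index bindex opsym))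
    (binp : bindex → Option (QAbs var varsort index bindex opsym))
    (ctx : List (varsort × var)) :
    db (QTerm.qOp d inp binp) ctx
      = .dOp d (fun i => dbo (inp i) ctx) (fun j => dbao (binp j) ctx) := by
  show DBT.dOp _ _ _ = _
  congr 1
  · funext i; cases h : inp i <;> simp only [h] <;> rfl
  · funext j; cases h : binp j
    · simp only [h]; rfl
    · rename_i A; cases A; simp only [h]; rfl

@[simp] theorem dbA_qAbs (xs : varsort) (x : var) (X : QTerm var varsort index bindex opsym)
    (ctx : List (varsort × var)) :
    dbA (QAbs.qAbs xs x X) ctx = .dAbs xs (db X ((xs, x) :: ctx)) := rfl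

/-- Mutual induction principle for quasiterms. -/
theorem qind {m1 : QTerm var varsort index bindex opsym → Prop}
    {m2 : QAbs var varsort index bindex opsym → Prop}
    (hvar : ∀ xs x, m1 (.qVar xs x))
    (hop : ∀ d inp binp, (∀ i X, inp i = some X → m1 X) →
      (∀ j A, binp j = some A → m2 A) → m1 (.qOp d inp binp))
    (habs : ∀ xs x X, m1 X → m2 (.qAbs xs x X)) :
    (∀ X, m1 X) ∧ (∀ A, m2 A) := by
  have mot3 : ∀ (o : Option (QTerm var varsort index bindex opsym)), Prop :=
    fun o => ∀ Y, o = some Y → m1 Y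
  constructor
  · intro X
    refine QTerm.rec (motive_1 := m1) (motive_2 := m2)
      (motive_3 := fun o => ∀ Y, o = some Y → m1 Y)
      (motive_4 := fun o => ∀ B, o = some B → m2 B)
      hvar (fun d inp binp ih1 ih2 => hop d inp binp ih1 ih2)
      (fun xs x X ih => habs xs x X ih)
      (fun Y h => by cases h) (fun a r Y h => by cases h; exact r)
      (fun B h => by cases h) (fun a r B h => by cases h; exact r) X
  · intro A
    refine QAbs.rec (motive_1 := m1) (motive_2 := m2)
      (motive_3 := fun o => ∀ Y, o = some Y → m1 Y)
      (motive_4 := fun o => ∀ B, o = some B → m2 B)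
      hvar (fun d inp binp ih1 ih2 => hop d inp binp ih1 ih2)
      (fun xs x X ih => habs xs x X ih)
      (fun Y h => by cases h) (fun a r Y h => by cases h; exact r)
      (fun B h => by cases h) (fun a r B h => by cases h; exact r) A

/-! ### Lookup lemmas -/

theorem lookup_not_mem {xs : varsort} {x : var} {c : List (varsort × var)}
    (h : (xs, x) ∉ c) (n : ℕ) :
    lookupCtx (index := index) (bindex := bindex) (opsym := opsym) xs x c n = .dFree xs x := by
  induction c generalizing n with
  | nil => rfl
  | cons p c ih =>
      have hp : p ≠ (xs, x) := fun hc => h (hc ▸ List.mem_cons_self)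
      simp only [lookupCtx, if_neg hp]
      exact ih (fun hc => h (List.mem_cons_of_mem _ hc)) (n+1)

theorem lookup_mem {xs : varsort} {x : var} {c : List (varsort × var)}
    (h : (xs, x) ∈ c) (n : ℕ) :
    ∃ j, j < c.length ∧ lookupCtx (index := index) (bindex := bindex) (opsym := opsym)
      xs x c n = .dBound (.up (n + j)) := by
  induction c generalizing n with
  | nil => cases h
  | cons p c ih =>
      by_cases hp : p = (xs, x)
      · exact ⟨0, by simp, by simp [lookupCtx, hp]⟩
      · have : (xs, x) ∈ c := by
          rcases List.mem_cons.1 h with h | h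
          · exact absurd h.symm hp
          · exact h
        obtain ⟨j, hj, hl⟩ := ih this (n+1)
        exact ⟨j+1, by simpa using hj, by simp only [lookupCtx, if_neg hp, hl]; congr 2; omega⟩

theorem lookup_append {xs : varsort} {x : var} (c1 c2 : List (varsort × var)) (n : ℕ) :
    lookupCtx (index := index) (bindex := bindex) (opsym := opsym) xs x (c1 ++ c2) n
      = if (xs, x) ∈ c1 then lookupCtx xs x c1 n else lookupCtx xs x c2 (n + c1.length) := by
  induction c1 generalizing n with
  | nil => simp [lookupCtx]
  | cons p c1 ih =>
      simp only [List.cons_append, lookupCtx, List.mem_cons, List.length_cons]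
      by_cases hp : p = (xs, x)
      · subst hp; simp [lookupCtx]
      · rw [if_neg hp, ih]
        have hnc : ¬ (xs, x) = p := fun h => hp h.symm
        by_cases hmem : (xs, x) ∈ c1
        · rw [if_pos hmem, if_pos (Or.inr hmem)]
          simp [lookupCtx, hp]
        · rw [if_neg hmem, if_neg (by tauto)]
          congr 1
          omega

theorem lookup_bump {xs : varsort} {x : var} {p : varsort × var} (hne : (xs, x) ≠ p)
    (c : List (varsort × var)) {n k : ℕ} (hk : k ≤ n) :
    lookupCtx (index := index) (bindex := bindex) (opsym := opsym) xs x c (n+1)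
      = dclose p k (lookupCtx xs x c n) := by
  induction c generalizing n with
  | nil =>
      simp only [lookupCtx, dclose]
      rw [if_neg hne]
  | cons q c ih =>
      by_cases hq : q = (xs, x)
      · simp only [lookupCtx, if_pos hq, dclose]
        rw [if_pos (by omega)]
      · simp only [lookupCtx, if_neg hq]
        exact ih (by omega)

/-! ### The close lemma -/

theorem lookupCtx_cons (xs : varsort) (x : var) (p : varsort × var)
    (c : List (varsort × var)) (n : ℕ) :
    lookupCtx (index := index) (bindex := bindex) (opsym := opsym) xs x (p :: c) n
      = if p = (xs, x) then .dBound (.up n) else lookupCtx xs x c (n+1) := rfl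

theorem mem_dFVd_dbo {o : Option (QTerm var varsort index bindex opsym)}
    {ctx : List (varsort × var)} {p : varsort × var} (h : p ∈ dFVd (dbo o ctx)) :
    ∃ X, o = some X ∧ p ∈ dFVd (db X ctx) := by
  cases o with
  | none => simp [dbo, dFVd] at h
  | some X => exact ⟨X, rfl, h⟩

theorem mem_dFVd_dbao {o : Option (QAbs var varsort index bindex opsym)}
    {ctx : List (varsort × var)} {p : varsort × var} (h : p ∈ dFVd (dbao o ctx)) :
    ∃ A, o = some A ∧ p ∈ dFVd (dbA A ctx) := by
  cases o with
  | none => simp [dbao, dFVd] at h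
  | some A => exact ⟨A, rfl, h⟩

theorem lookup_close {xs : varsort} {x : var} {p : varsort × var} {c2 : List (varsort × var)}
    (hp : p ∉ c2) (c1 : List (varsort × var)) (n : ℕ) :
    lookupCtx (index := index) (bindex := bindex) (opsym := opsym) xs x (c1 ++ p :: c2) n
      = dclose p (n + c1.length) (lookupCtx xs x (c1 ++ c2) n) := by
  by_cases hm1 : (xs, x) ∈ c1
  · rw [lookup_append, if_pos hm1, lookup_append, if_pos hm1]
    obtain ⟨j, hj, hl⟩ := lookup_mem (index := index) (bindex := bindex) (opsym := opsym) hm1 n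
    rw [hl]
    simp only [dclose]
    rw [if_neg (by omega)]
  · rw [lookup_append, if_neg hm1, lookup_append, if_neg hm1]
    by_cases hx : (xs, x) = p
    · have hp' : (xs, x) ∉ c2 := by rw [hx]; exact hp
      rw [lookupCtx_cons, if_pos hx.symm, lookup_not_mem hp']
      show _ = if (xs,x) = p then _ else _
      rw [if_pos hx]
    · rw [lookupCtx_cons, if_neg (fun h => hx h.symm)]
      exact lookup_bump hx c2 (le_refl _)

theorem db_close :
    (∀ X : QTerm var varsort index bindex opsym, ∀ (c1 c2 : List (varsort × var)) p, p ∉ c2 →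
      db X (c1 ++ p :: c2) = dclose p c1.length (db X (c1 ++ c2))) ∧
    (∀ A : QAbs var varsort index bindex opsym, ∀ (c1 c2 : List (varsort × var)) p, p ∉ c2 →
      dbA A (c1 ++ p :: c2) = dclose p c1.length (dbA A (c1 ++ c2))) := by
  apply qind
  · intro xs x c1 c2 p hp
    simpa using lookup_close hp c1 0
  · intro d inp binp ih1 ih2 c1 c2 p hp
    rw [db_qOp, db_qOp]
    simp only [dclose]
    congr 1
    · funext i
      cases h : inp i with
      | none => rfl
      | some X => exact ih1 i X h c1 c2 p hp
    · funext j
      cases h : binp j with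
      | none => rfl
      | some A => exact ih2 j A h c1 c2 p hp
  · intro xs x X ih c1 c2 p hp
    simp only [dbA_qAbs, dclose]
    rw [show (xs, x) :: (c1 ++ p :: c2) = ((xs, x) :: c1) ++ p :: c2 from rfl,
      show (xs, x) :: (c1 ++ c2) = ((xs, x) :: c1) ++ c2 from rfl,
      (ih ((xs,x) :: c1) c2 p hp)]
    rfl

theorem db_cons_close {p : varsort × var} {c : List (varsort × var)} (hp : p ∉ c)
    (X : QTerm var varsort index bindex opsym) :
    db X (p :: c) = dclose p 0 (db X c) := by
  simpa using db_close.1 X [] c p hp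

theorem dbA_cons_close {p : varsort × var} {c : List (varsort × var)} (hp : p ∉ c)
    (A : QAbs var varsort index bindex opsym) :
    dbA A (p :: c) = dclose p 0 (dbA A c) := by
  simpa using db_close.2 A [] c p hp

/-! ### Context irrelevance for fresh entries -/

theorem db_ctx_irrel :
    (∀ X : QTerm var varsort index bindex opsym, ∀ (c1 c2 : List (varsort × var)),
      (∀ p ∈ c2, p ∈ c1 ∨ QFresh p.1 p.2 X) → db X (c1 ++ c2) = db X c1) ∧
    (∀ A : QAbs var varsort index bindex opsym, ∀ (c1 c2 : List (varsort × var)),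
      (∀ p ∈ c2, p ∈ c1 ∨ QFreshAbs p.1 p.2 A) → dbA A (c1 ++ c2) = dbA A c1) := by
  apply qind
  · intro xs x c1 c2 h
    rw [db_qVar, db_qVar, lookup_append]
    by_cases hm : (xs, x) ∈ c1
    · rw [if_pos hm]
    · rw [if_neg hm]
      have : (xs, x) ∉ c2 := by
        intro hc
        rcases h (xs, x) hc with h' | h'
        · exact hm h'
        · cases h' with
          | qVar hne => exact hne rfl
      rw [lookup_not_mem this, lookup_not_mem hm]
  · intro d inp binp ih1 ih2 c1 c2 h
    rw [db_qOp, db_qOp]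
    congr 1
    · funext i
      cases hi : inp i with
      | none => rfl
      | some X =>
          refine ih1 i X hi c1 c2 fun p hp => ?_
          rcases h p hp with h' | h'
          · exact Or.inl h'
          · cases h' with
            | qOp h1 h2 => exact Or.inr (h1 i X hi)
    · funext j
      cases hj : binp j with
      | none => rfl
      | some A =>
          refine ih2 j A hj c1 c2 fun p hp => ?_
          rcases h p hp with h' | h'
          · exact Or.inl h'
          · cases h' with
            | qOp h1 h2 => exact Or.inr (h2 j A hj)
  · intro xs x X ih c1 c2 h
    simp only [dbA_qAbs]
    rw [show (xs, x) :: (c1 ++ c2) = ((xs, x) :: c1) ++ c2 from rfl,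
      ih ((xs,x) :: c1) c2 ?_]
    intro p hp
    rcases h p hp with h' | h'
    · exact Or.inl (List.mem_cons_of_mem _ h')
    · cases h' with
      | qAbs_bound => exact Or.inl List.mem_cons_self
      | qAbs_body hf => exact Or.inr hf

/-! ### Free variables of the translation -/

theorem dFVd_lookup {xs : varsort} {x : var} {c : List (varsort × var)} {n : ℕ}
    {q : varsort × var}
    (h : q ∈ dFVd (lookupCtx (index := index) (bindex := bindex) (opsym := opsym) xs x c n)) :
    q = (xs, x) ∧ (xs, x) ∉ c := by
  induction c generalizing n with
  | nil =>
      simp only [lookupCtx, dFVd, Set.mem_singleton_iff] at h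
      exact ⟨h, by simp⟩
  | cons p c ih =>
      by_cases hp : p = (xs, x)
      · rw [lookupCtx, if_pos hp] at h
        simp [dFVd] at h
      · rw [lookupCtx, if_neg hp] at h
        obtain ⟨h1, h2⟩ := ih h
        exact ⟨h1, by
          simp only [List.mem_cons, not_or]
          exact ⟨fun hc => hp hc.symm, h2⟩⟩

theorem db_not_free_of_mem_ctx :
    (∀ X : QTerm var varsort index bindex opsym, ∀ (ctx : List (varsort × var)) p, p ∈ ctx →
      p ∉ dFVd (db X ctx)) ∧
    (∀ A : QAbs var varsort index bindex opsym, ∀ (ctx : List (varsort × var)) p, p ∈ ctx →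
      p ∉ dFVd (dbA A ctx)) := by
  apply qind
  · intro xs x ctx p hmem h
    obtain ⟨h1, h2⟩ := dFVd_lookup (db_qVar xs x ctx ▸ h)
    exact h2 (h1 ▸ hmem)
  · intro d inp binp ih1 ih2 ctx p hmem h
    rw [db_qOp] at h
    rcases h with h | h
    · obtain ⟨i, hi⟩ := Set.mem_iUnion.1 h
      have hi2 : p ∈ dFVd (dbo (inp i) ctx) := hi
      obtain ⟨X, hX, hmemX⟩ := mem_dFVd_dbo hi2
      exact ih1 i X hX ctx p hmem hmemX
    · obtain ⟨j, hj⟩ := Set.mem_iUnion.1 h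
      have hj2 : p ∈ dFVd (dbao (binp j) ctx) := hj
      obtain ⟨A, hA, hmemA⟩ := mem_dFVd_dbao hj2
      exact ih2 j A hA ctx p hmem hmemA
  · intro xs x X ih ctx p hmem h
    exact ih ((xs,x) :: ctx) p (List.mem_cons_of_mem _ hmem) h

theorem fresh_not_free :
    (∀ (ys : varsort) (y : var) (X : QTerm var varsort index bindex opsym), QFresh ys y X →
      ∀ ctx, (ys, y) ∉ dFVd (db X ctx)) ∧
    (∀ (ys : varsort) (y : var) (A : QAbs var varsort index bindex opsym), QFreshAbs ys y A →
      ∀ ctx, (ys, y) ∉ dFVd (dbA A ctx)) := by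
  have pVar : ∀ (ys : varsort) (y xs : _) (x : var), (ys, y) ≠ (xs, x) →
      ∀ ctx, (ys, y) ∉ dFVd (db (QTerm.qVar (index := index) (bindex := bindex)
        (opsym := opsym) xs x) ctx) := by
    intro ys y xs x hne ctx hc
    obtain ⟨h1, _⟩ := dFVd_lookup hc
    exact hne h1
  have pOp : ∀ (ys : varsort) (y : var) (d : opsym) (inp : index → Option (QTerm var varsort index bindex opsym)) (binp : bindex → Option (QAbs var varsort index bindex opsym)),
      (∀ (i : index) X, inp i = some X → ∀ ctx, (ys, y) ∉ dFVd (db X ctx)) →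
      (∀ (j : bindex) A, binp j = some A → ∀ ctx, (ys, y) ∉ dFVd (dbA A ctx)) →
      ∀ ctx, (ys, y) ∉ dFVd (db (QTerm.qOp d inp binp) ctx) := by
    intro ys y d inp binp ih1 ih2 ctx hc
    rw [db_qOp] at hc
    rcases hc with hc | hc
    · obtain ⟨i, hi⟩ := Set.mem_iUnion.1 hc
      have hi2 : (ys, y) ∈ dFVd (dbo (inp i) ctx) := hi
      obtain ⟨X, hX, hmemX⟩ := mem_dFVd_dbo hi2
      exact ih1 i X hX ctx hmemX
    · obtain ⟨j, hj⟩ := Set.mem_iUnion.1 hc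
      have hj2 : (ys, y) ∈ dFVd (dbao (binp j) ctx) := hj
      obtain ⟨A, hA, hmemA⟩ := mem_dFVd_dbao hj2
      exact ih2 j A hA ctx hmemA
  have pBound : ∀ (xs : varsort) (x : var) (X : QTerm var varsort index bindex opsym),
      ∀ ctx, (xs, x) ∉ dFVd (dbA (QAbs.qAbs xs x X) ctx) := by
    intro xs x X ctx hc
    exact db_not_free_of_mem_ctx.1 X ((xs,x) :: ctx) (xs,x) List.mem_cons_self hc
  have pBody : ∀ (ys : varsort) (y xs : _) (x : var) (X : QTerm var varsort index bindex opsym),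
      (∀ ctx, (ys, y) ∉ dFVd (db X ctx)) →
      ∀ ctx, (ys, y) ∉ dFVd (dbA (QAbs.qAbs xs x X) ctx) := by
    intro ys y xs x X ih ctx hc
    exact ih ((xs,x) :: ctx) hc
  constructor
  · intro ys y X h
    refine QFresh.rec
      (motive_1 := fun X _ => ∀ ctx, (ys, y) ∉ dFVd (db X ctx))
      (motive_2 := fun A _ => ∀ ctx, (ys, y) ∉ dFVd (dbA A ctx))
      ?_ ?_ ?_ ?_ h
    · intro xs x hne; exact pVar ys y xs x hne
    · intro d inp binp _ _ ih1 ih2; exact pOp ys y d inp binp ih1 ih2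
    · intro X; exact pBound ys y X
    · intro xs x X _ ih; exact pBody ys y xs x X ih
  · intro ys y A h
    refine QFreshAbs.rec
      (motive_1 := fun X _ => ∀ ctx, (ys, y) ∉ dFVd (db X ctx))
      (motive_2 := fun A _ => ∀ ctx, (ys, y) ∉ dFVd (dbA A ctx))
      ?_ ?_ ?_ ?_ h
    · intro xs x hne; exact pVar ys y xs x hne
    · intro d inp binp _ _ ih1 ih2; exact pOp ys y d inp binp ih1 ih2
    · intro X; exact pBound ys y X
    · intro xs x X _ ih; exact pBody ys y xs x X ih

/-! ### Swapping lemmas -/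

theorem swapVar_invol (z1 z2 x : var) : swapVar var z1 z2 (swapVar var z1 z2 x) = x := by
  unfold swapVar
  split_ifs <;> simp_all

theorem swapVarS_invol (zs xs : varsort) (z1 z2 x : var) :
    swapVarS var varsort zs xs z1 z2 (swapVarS var varsort zs xs z1 z2 x) = x := by
  unfold swapVarS
  split_ifs <;> simp_all [swapVar_invol]

theorem swapVarS_inj {zs xs : varsort} {z1 z2 : var} {a b : var}
    (h : swapVarS var varsort zs xs z1 z2 a = swapVarS var varsort zs xs z1 z2 b) : a = b := by
  have := congrArg (swapVarS var varsort zs xs z1 z2) h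
  rwa [swapVarS_invol, swapVarS_invol] at this

@[simp] theorem qSwap_qVar (z1 z2 : var) (zs xs : varsort) (x : var) :
    qSwap (index := index) (bindex := bindex) (opsym := opsym) z1 z2 zs (.qVar xs x)
      = .qVar xs (swapVarS var varsort zs xs z1 z2 x) := rfl

theorem qSwap_qOp (z1 z2 : var) (zs : varsort) (d : opsym)
    (inp : index → Option (QTerm var varsort index bindex opsym))
    (binp : bindex → Option (QAbs var varsort index bindex opsym)) :
    qSwap z1 z2 zs (.qOp d inp binp)
      = .qOp d (fun i => (inp i).map (qSwap z1 z2 zs)) (fun j => (binp j).map (qSwapAbs z1 z2 zs)) := by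
  show QTerm.qOp _ _ _ = _
  congr 1
  · funext i; cases h : inp i <;> simp only [h] <;> rfl
  · funext j; cases h : binp j
    · simp only [h]; rfl
    · rename_i A; cases A; simp only [h]; rfl

@[simp] theorem qSwapAbs_qAbs (z1 z2 : var) (zs xs : varsort) (x : var)
    (X : QTerm var varsort index bindex opsym) :
    qSwapAbs z1 z2 zs (.qAbs xs x X)
      = .qAbs xs (swapVarS var varsort zs xs z1 z2 x) (qSwap z1 z2 zs X) := rfl

/-- The free-renaming function associated to a swap. -/
noncomputable def swf (zs : varsort) (z1 z2 : var) : varsort → var → var :=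
  fun us v => swapVarS var varsort zs us z1 z2 v

/-- The pair version. -/
noncomputable def swp (zs : varsort) (z1 z2 : var) : varsort × var → varsort × var :=
  fun p => (p.1, swf zs z1 z2 p.1 p.2)

theorem swp_invol (zs : varsort) (z1 z2 : var) (p : varsort × var) :
    swp zs z1 z2 (swp zs z1 z2 p) = p := by
  simp [swp, swf, swapVarS_invol]

theorem lookup_swap (zs : varsort) (z1 z2 : var) (xs : varsort) (x : var)
    (c : List (varsort × var)) (n : ℕ) :
    lookupCtx (index := index) (bindex := bindex) (opsym := opsym)
      xs (swf zs z1 z2 xs x) c n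
      = dmapFree (swf zs z1 z2) (lookupCtx xs x (c.map (swp zs z1 z2)) n) := by
  induction c generalizing n with
  | nil => rfl
  | cons q c ih =>
      have hcond : (q = (xs, swf zs z1 z2 xs x)) ↔ (swp zs z1 z2 q = (xs, x)) := by
        constructor
        · intro h; rw [h]; simp [swp, swf, swapVarS_invol]
        · intro h
          have := congrArg (swp zs z1 z2) h
          rw [swp_invol] at this
          rw [this]; simp [swp]
      by_cases hq : q = (xs, swf zs z1 z2 xs x)
      · rw [lookupCtx_cons, if_pos hq, List.map_cons, lookupCtx_cons, if_pos (hcond.1 hq)]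
        rfl
      · rw [lookupCtx_cons, if_neg hq, List.map_cons, lookupCtx_cons,
          if_neg (fun h => hq (hcond.2 h)), ih]

theorem db_swap (z1 z2 : var) (zs : varsort) :
    (∀ X : QTerm var varsort index bindex opsym, ∀ ctx,
      db (qSwap z1 z2 zs X) ctx = dmapFree (swf zs z1 z2) (db X (ctx.map (swp zs z1 z2)))) ∧
    (∀ A : QAbs var varsort index bindex opsym, ∀ ctx,
      dbA (qSwapAbs z1 z2 zs A) ctx = dmapFree (swf zs z1 z2) (dbA A (ctx.map (swp zs z1 z2)))) := by
  apply qind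
  · intro xs x ctx
    rw [qSwap_qVar, db_qVar, db_qVar]
    exact lookup_swap zs z1 z2 xs x ctx 0
  · intro d inp binp ih1 ih2 ctx
    rw [qSwap_qOp, db_qOp, db_qOp]
    simp only [dmapFree]
    congr 1
    · funext i
      cases h : inp i with
      | none => rfl
      | some X => exact ih1 i X h ctx
    · funext j
      cases h : binp j with
      | none => rfl
      | some A => exact ih2 j A h ctx
  · intro xs x X ih ctx
    rw [qSwapAbs_qAbs, dbA_qAbs, dbA_qAbs]
    simp only [dmapFree]
    congr 1
    have := ih ((xs, swapVarS var varsort zs xs z1 z2 x) :: ctx)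
    rw [this]
    congr 2
    simp [swp, swf, swapVarS_invol]

theorem qSwap_invol (z1 z2 : var) (zs : varsort) :
    (∀ X : QTerm var varsort index bindex opsym, qSwap z1 z2 zs (qSwap z1 z2 zs X) = X) ∧
    (∀ A : QAbs var varsort index bindex opsym, qSwapAbs z1 z2 zs (qSwapAbs z1 z2 zs A) = A) := by
  apply qind
  · intro xs x
    rw [qSwap_qVar, qSwap_qVar, swapVarS_invol]
  · intro d inp binp ih1 ih2
    rw [qSwap_qOp, qSwap_qOp]
    congr 1
    · funext i
      cases h : inp i with
      | none => simp [h]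
      | some X => simp [h, ih1 i X h]
    · funext j
      cases h : binp j with
      | none => simp [h]
      | some A => simp [h, ih2 j A h]
  · intro xs x X ih
    rw [qSwapAbs_qAbs, qSwapAbs_qAbs, swapVarS_invol, ih]

theorem idom_map {α β : Type u} (inp : α → Option β) (f : β → β) :
    idom (fun a => (inp a).map f) = idom inp := by
  ext a
  simp [idom]

theorem qSwap_good (z1 z2 : var) (zs : varsort) :
    ∀ {X : QTerm var varsort index bindex opsym}, QGood X → QGood (qSwap z1 z2 zs X) := by
  have main : (∀ (X : QTerm var varsort index bindex opsym) (h : QGood X),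
      QGood (qSwap z1 z2 zs X)) ∧
      (∀ (A : QAbs var varsort index bindex opsym) (h : QGoodAbs A),
      QGoodAbs (qSwapAbs z1 z2 zs A)) := by
    constructor
    · intro X h
      refine QGood.rec (motive_1 := fun X _ => QGood (qSwap z1 z2 zs X))
        (motive_2 := fun A _ => QGoodAbs (qSwapAbs z1 z2 zs A)) ?_ ?_ ?_ h
      · intro xs x; rw [qSwap_qVar]; exact QGood.qVar
      · intro d inp binp _ _ hs1 hs2 ih1 ih2
        rw [qSwap_qOp]
        refine QGood.qOp ?_ ?_ ?_ ?_
        · intro i X hX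
          cases h' : inp i with
          | none => rw [h'] at hX; cases hX
          | some X0 => rw [h'] at hX; cases hX; exact ih1 i X0 h'
        · intro j A hA
          cases h' : binp j with
          | none => rw [h'] at hA; cases hA
          | some A0 => rw [h'] at hA; cases hA; exact ih2 j A0 h'
        · rwa [show (fun i => Option.map (qSwap z1 z2 zs) (inp i)) = fun i => (inp i).map (qSwap z1 z2 zs) from rfl, smallDom, idom_map]
        · rwa [smallDom, idom_map]
      · intro xs x X _ ih
        rw [qSwapAbs_qAbs]
        exact QGoodAbs.qAbs ih
    · intro A h
      refine QGoodAbs.rec (motive_1 := fun X _ => QGood (qSwap z1 z2 zs X))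
        (motive_2 := fun A _ => QGoodAbs (qSwapAbs z1 z2 zs A)) ?_ ?_ ?_ h
      · intro xs x; rw [qSwap_qVar]; exact QGood.qVar
      · intro d inp binp _ _ hs1 hs2 ih1 ih2
        rw [qSwap_qOp]
        refine QGood.qOp ?_ ?_ ?_ ?_
        · intro i X hX
          cases h' : inp i with
          | none => rw [h'] at hX; cases hX
          | some X0 => rw [h'] at hX; cases hX; exact ih1 i X0 h'
        · intro j A hA
          cases h' : binp j with
          | none => rw [h'] at hA; cases hA
          | some A0 => rw [h'] at hA; cases hA; exact ih2 j A0 h'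
        · rwa [smallDom, idom_map]
        · rwa [smallDom, idom_map]
      · intro xs x X _ ih
        rw [qSwapAbs_qAbs]
        exact QGoodAbs.qAbs ih
  exact fun {X} h => main.1 X h

theorem qSwapAbs_good (z1 z2 : var) (zs : varsort) :
    ∀ {A : QAbs var varsort index bindex opsym}, QGoodAbs A → QGoodAbs (qSwapAbs z1 z2 zs A) := by
  intro A h
  cases A with
  | qAbs xs x X =>
      cases h with
      | qAbs hX => rw [qSwapAbs_qAbs]; exact QGoodAbs.qAbs (qSwap_good z1 z2 zs hX)

/-! ### All variables of a quasiterm -/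

/-- The set of all variables (free or binding, of any sort) occurring in a quasiterm. -/
noncomputable def qAllv : QTerm var varsort index bindex opsym → Set var :=
  QTerm.rec (motive_1 := fun _ => Set var) (motive_2 := fun _ => Set var)
    (motive_3 := fun _ => Set var) (motive_4 := fun _ => Set var)
    (fun _ x => {x})
    (fun _ _ _ rinp rbinp => (⋃ i, rinp i) ∪ ⋃ j, rbinp j)
    (fun _ x _ rX => {x} ∪ rX)
    ∅ (fun _ r => r) ∅ (fun _ r => r)

/-- All variables of a quasiabstraction. -/
noncomputable def qAllvA : QAbs var varsort index bindex opsym → Set var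
  | .qAbs _ x X => {x} ∪ qAllv X

noncomputable def qAllvo : Option (QTerm var varsort index bindex opsym) → Set var
  | none => ∅
  | some X => qAllv X

noncomputable def qAllvao : Option (QAbs var varsort index bindex opsym) → Set var
  | none => ∅
  | some A => qAllvA A

@[simp] theorem qAllv_qVar (xs : varsort) (x : var) :
    qAllv (QTerm.qVar (index := index) (bindex := bindex) (opsym := opsym) xs x) = {x} := rfl

theorem qAllv_qOp (d : opsym) (inp : index → Option (QTerm var varsort index bindex opsym))
    (binp : bindex → Option (QAbs var varsort index bindex opsym)) :
    qAllv (QTerm.qOp d inp binp) = (⋃ i, qAllvo (inp i)) ∪ ⋃ j, qAllvao (binp j) := by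
  show (⋃ i, _) ∪ (⋃ j, _) = _
  congr 1
  · exact congrArg Set.iUnion (funext fun i => by
      cases h : inp i <;> simp only [h] <;> rfl)
  · exact congrArg Set.iUnion (funext fun j => by
      cases h : binp j
      · simp only [h]; rfl
      · rename_i A; cases A; simp only [h]; rfl)

@[simp] theorem qAllvA_qAbs (xs : varsort) (x : var)
    (X : QTerm var varsort index bindex opsym) :
    qAllvA (QAbs.qAbs xs x X) = {x} ∪ qAllv X := rfl

/-- The set of binding variables occurring in a quasiterm. -/
noncomputable def bv : QTerm var varsort index bindex opsym → Set var :=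
  QTerm.rec (motive_1 := fun _ => Set var) (motive_2 := fun _ => Set var)
    (motive_3 := fun _ => Set var) (motive_4 := fun _ => Set var)
    (fun _ _ => ∅)
    (fun _ _ _ rinp rbinp => (⋃ i, rinp i) ∪ ⋃ j, rbinp j)
    (fun _ x _ rX => {x} ∪ rX)
    ∅ (fun _ r => r) ∅ (fun _ r => r)

noncomputable def bvA : QAbs var varsort index bindex opsym → Set var
  | .qAbs _ x X => {x} ∪ bv X

noncomputable def bvo : Option (QTerm var varsort index bindex opsym) → Set var
  | none => ∅
  | some X => bv X

noncomputable def bvao : Option (QAbs var varsort index bindex opsym) → Set var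
  | none => ∅
  | some A => bvA A

@[simp] theorem bv_qVar (xs : varsort) (x : var) :
    bv (QTerm.qVar (index := index) (bindex := bindex) (opsym := opsym) xs x) = ∅ := rfl

theorem bv_qOp (d : opsym) (inp : index → Option (QTerm var varsort index bindex opsym))
    (binp : bindex → Option (QAbs var varsort index bindex opsym)) :
    bv (QTerm.qOp d inp binp) = (⋃ i, bvo (inp i)) ∪ ⋃ j, bvao (binp j) := by
  show (⋃ i, _) ∪ (⋃ j, _) = _
  congr 1
  · exact congrArg Set.iUnion (funext fun i => by
      cases h : inp i <;> simp only [h] <;> rfl)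
  · exact congrArg Set.iUnion (funext fun j => by
      cases h : binp j
      · simp only [h]; rfl
      · rename_i A; cases A; simp only [h]; rfl)

@[simp] theorem bvA_qAbs (xs : varsort) (x : var)
    (X : QTerm var varsort index bindex opsym) :
    bvA (QAbs.qAbs xs x X) = {x} ∪ bv X := rfl

/-! ### Smallness of variable sets of good quasiterms -/

theorem small_union_aux {α β : Type u} (hreg : (Cardinal.mk var).IsRegular)
    {inp : α → Option β} (hd : smallDom var inp) {F : α → Set var}
    (h0 : ∀ a, inp a = none → F a = ∅) (h : ∀ a, Cardinal.mk (F a) < Cardinal.mk var) :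
    Cardinal.mk ↥(⋃ a, F a) < Cardinal.mk var := by
  have heq : (⋃ a, F a) = ⋃ (a : idom inp), F a := by
    ext v
    constructor
    · intro hv
      obtain ⟨a, ha⟩ := Set.mem_iUnion.1 hv
      cases hi : inp a with
      | none => rw [h0 a hi] at ha; cases ha
      | some b =>
          exact Set.mem_iUnion.2 ⟨⟨a, by simp [idom, hi]⟩, ha⟩
    · intro hv
      obtain ⟨a, ha⟩ := Set.mem_iUnion.1 hv
      exact Set.mem_iUnion.2 ⟨a, ha⟩
  rw [heq]
  exact (Cardinal.card_iUnion_lt_iff_forall_of_isRegular hreg hd).2 fun a => h a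

theorem small_two_union (hinf : Cardinal.aleph0 ≤ Cardinal.mk var) {s t : Set var}
    (hs : Cardinal.mk s < Cardinal.mk var) (ht : Cardinal.mk t < Cardinal.mk var) :
    Cardinal.mk ↥(s ∪ t) < Cardinal.mk var :=
  lt_of_le_of_lt (Cardinal.mk_union_le s t) (Cardinal.add_lt_of_lt hinf hs ht)

theorem small_singleton (hinf : Cardinal.aleph0 ≤ Cardinal.mk var) (x : var) :
    Cardinal.mk ↥({x} : Set var) < Cardinal.mk var := by
  rw [Cardinal.mk_singleton]
  exact lt_of_lt_of_le Cardinal.one_lt_aleph0 hinf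

theorem good_allv_small (hinf : Cardinal.aleph0 ≤ Cardinal.mk var)
    (hreg : (Cardinal.mk var).IsRegular) :
    (∀ X : QTerm var varsort index bindex opsym, QGood X →
      Cardinal.mk (qAllv X) < Cardinal.mk var) ∧
    (∀ A : QAbs var varsort index bindex opsym, QGoodAbs A →
      Cardinal.mk (qAllvA A) < Cardinal.mk var) := by
  have pVar : ∀ (xs : varsort) (x : var),
      Cardinal.mk (qAllv (QTerm.qVar (index := index) (bindex := bindex)
        (opsym := opsym) xs x)) < Cardinal.mk var := by
    intro xs x
    rw [qAllv_qVar]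
    exact small_singleton hinf x
  have pOp : ∀ (d : opsym) (inp : index → Option (QTerm var varsort index bindex opsym))
      (binp : bindex → Option (QAbs var varsort index bindex opsym)),
      smallDom var inp → smallDom var binp →
      (∀ i X, inp i = some X → Cardinal.mk (qAllv X) < Cardinal.mk var) →
      (∀ j A, binp j = some A → Cardinal.mk (qAllvA A) < Cardinal.mk var) →
      Cardinal.mk (qAllv (QTerm.qOp d inp binp)) < Cardinal.mk var := by
    intro d inp binp hs1 hs2 ih1 ih2
    rw [qAllv_qOp]
    refine small_two_union hinf ?_ ?_
    · refine small_union_aux hreg hs1 (fun a ha => by rw [ha]; rfl) fun a => ?_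
      cases h : inp a with
      | none =>
          simp only [qAllvo, Cardinal.mk_emptyCollection]
          exact lt_of_lt_of_le Cardinal.aleph0_pos hinf
      | some X => exact ih1 a X h
    · refine small_union_aux hreg hs2 (fun a ha => by rw [ha]; rfl) fun a => ?_
      cases h : binp a with
      | none =>
          simp only [qAllvao, Cardinal.mk_emptyCollection]
          exact lt_of_lt_of_le Cardinal.aleph0_pos hinf
      | some A => exact ih2 a A h
  have pAbs : ∀ (xs : varsort) (x : var) (X : QTerm var varsort index bindex opsym),
      Cardinal.mk (qAllv X) < Cardinal.mk var →
      Cardinal.mk (qAllvA (QAbs.qAbs xs x X)) < Cardinal.mk var := by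
    intro xs x X ih
    rw [qAllvA_qAbs]
    exact small_two_union hinf (small_singleton hinf x) ih
  constructor
  · intro X h
    refine QGood.rec (motive_1 := fun X _ => Cardinal.mk (qAllv X) < Cardinal.mk var)
      (motive_2 := fun A _ => Cardinal.mk (qAllvA A) < Cardinal.mk var) ?_ ?_ ?_ h
    · intro xs x; exact pVar xs x
    · intro d inp binp _ _ hs1 hs2 ih1 ih2; exact pOp d inp binp hs1 hs2 ih1 ih2
    · intro xs x X _ ih; exact pAbs xs x X ih
  · intro A h
    refine QGoodAbs.rec (motive_1 := fun X _ => Cardinal.mk (qAllv X) < Cardinal.mk var)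
      (motive_2 := fun A _ => Cardinal.mk (qAllvA A) < Cardinal.mk var) ?_ ?_ ?_ h
    · intro xs x; exact pVar xs x
    · intro d inp binp _ _ hs1 hs2 ih1 ih2; exact pOp d inp binp hs1 hs2 ih1 ih2
    · intro xs x X _ ih; exact pAbs xs x X ih

theorem exists_fresh_var {s : Set var} (h : Cardinal.mk s < Cardinal.mk var) :
    ∃ v : var, v ∉ s := by
  by_contra hc
  push_neg at hc
  have : s = Set.univ := Set.eq_univ_of_forall hc
  rw [this, Cardinal.mk_univ] at h
  exact lt_irrefl _ h

/-! ### Freshness from non-occurrence -/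

theorem fresh_of_not_allv :
    (∀ X : QTerm var varsort index bindex opsym, ∀ (ys : varsort) (y : var),
      y ∉ qAllv X → QFresh ys y X) ∧
    (∀ A : QAbs var varsort index bindex opsym, ∀ (ys : varsort) (y : var),
      y ∉ qAllvA A → QFreshAbs ys y A) := by
  apply qind
  · intro xs x ys y h
    rw [qAllv_qVar] at h
    exact QFresh.qVar fun hc => h (by rw [Prod.mk.injEq] at hc; exact hc.2 ▸ rfl)
  · intro d inp binp ih1 ih2 ys y h
    rw [qAllv_qOp] at h
    refine QFresh.qOp ?_ ?_
    · intro i X hi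
      refine ih1 i X hi ys y fun hc => h ?_
      exact Set.mem_union_left _ (Set.mem_iUnion.2 ⟨i, by rw [show qAllvo (inp i) = qAllv X by rw [hi]; rfl]; exact hc⟩)
    · intro j A hj
      refine ih2 j A hj ys y fun hc => h ?_
      exact Set.mem_union_right _ (Set.mem_iUnion.2 ⟨j, by rw [show qAllvao (binp j) = qAllvA A by rw [hj]; rfl]; exact hc⟩)
  · intro xs x X ih ys y h
    rw [qAllvA_qAbs] at h
    exact QFreshAbs.qAbs_body (ih ys y fun hc => h (Set.mem_union_right _ hc))

theorem dFVd_db_allv :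
    (∀ X : QTerm var varsort index bindex opsym, ∀ ctx p,
      p ∈ dFVd (db X ctx) → p.2 ∈ qAllv X) ∧
    (∀ A : QAbs var varsort index bindex opsym, ∀ ctx p,
      p ∈ dFVd (dbA A ctx) → p.2 ∈ qAllvA A) := by
  apply qind
  · intro xs x ctx p h
    obtain ⟨h1, _⟩ := dFVd_lookup (db_qVar xs x ctx ▸ h)
    rw [qAllv_qVar, h1]
    rfl
  · intro d inp binp ih1 ih2 ctx p h
    rw [db_qOp] at h
    rw [qAllv_qOp]
    rcases h with h | h
    · obtain ⟨i, hi⟩ := Set.mem_iUnion.1 h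
      have hi2 : p ∈ dFVd (dbo (inp i) ctx) := hi
      obtain ⟨X, hX, hmemX⟩ := mem_dFVd_dbo hi2
      refine Set.mem_union_left _ (Set.mem_iUnion.2 ⟨i, ?_⟩)
      rw [show qAllvo (inp i) = qAllv X by rw [hX]; rfl]
      exact ih1 i X hX ctx p hmemX
    · obtain ⟨j, hj⟩ := Set.mem_iUnion.1 h
      have hj2 : p ∈ dFVd (dbao (binp j) ctx) := hj
      obtain ⟨A, hA, hmemA⟩ := mem_dFVd_dbao hj2
      refine Set.mem_union_right _ (Set.mem_iUnion.2 ⟨j, ?_⟩)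
      rw [show qAllvao (binp j) = qAllvA A by rw [hA]; rfl]
      exact ih2 j A hA ctx p hmemA
  · intro xs x X ih ctx p h
    rw [qAllvA_qAbs]
    exact Set.mem_union_right _ (ih ((xs,x)::ctx) p h)

theorem qAllv_swap (z1 z2 : var) (zs : varsort) :
    (∀ X : QTerm var varsort index bindex opsym, ∀ v,
      v ∈ qAllv (qSwap z1 z2 zs X) → v = z1 ∨ v = z2 ∨ v ∈ qAllv X) ∧
    (∀ A : QAbs var varsort index bindex opsym, ∀ v,
      v ∈ qAllvA (qSwapAbs z1 z2 zs A) → v = z1 ∨ v = z2 ∨ v ∈ qAllvA A) := by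
  have key : ∀ (xs : varsort) (x v : var), v = swapVarS var varsort zs xs z1 z2 x →
      v = z1 ∨ v = z2 ∨ v = x := by
    intro xs x v h
    unfold swapVarS swapVar at h
    split_ifs at h <;> simp_all
  apply qind
  · intro xs x v h
    rw [qSwap_qVar, qAllv_qVar] at h
    rcases key xs x v h with h | h | h
    · exact Or.inl h
    · exact Or.inr (Or.inl h)
    · exact Or.inr (Or.inr (by rw [qAllv_qVar]; exact h ▸ rfl))
  · intro d inp binp ih1 ih2 v h
    rw [qSwap_qOp, qAllv_qOp] at h
    rw [qAllv_qOp]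
    rcases h with h | h
    · obtain ⟨i, hi⟩ := Set.mem_iUnion.1 h
      have hi2 : v ∈ qAllvo ((inp i).map (qSwap z1 z2 zs)) := hi
      cases hin : inp i with
      | none => rw [hin] at hi2; cases hi2
      | some X =>
          rw [hin] at hi2
          rcases ih1 i X hin v hi2 with h' | h' | h'
          · exact Or.inl h'
          · exact Or.inr (Or.inl h')
          · refine Or.inr (Or.inr (Set.mem_union_left _ (Set.mem_iUnion.2 ⟨i, ?_⟩)))
            rw [show qAllvo (inp i) = qAllv X by rw [hin]; rfl]
            exact h'
    · obtain ⟨j, hj⟩ := Set.mem_iUnion.1 h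
      have hj2 : v ∈ qAllvao ((binp j).map (qSwapAbs z1 z2 zs)) := hj
      cases hin : binp j with
      | none => rw [hin] at hj2; cases hj2
      | some A =>
          rw [hin] at hj2
          rcases ih2 j A hin v hj2 with h' | h' | h'
          · exact Or.inl h'
          · exact Or.inr (Or.inl h')
          · refine Or.inr (Or.inr (Set.mem_union_right _ (Set.mem_iUnion.2 ⟨j, ?_⟩)))
            rw [show qAllvao (binp j) = qAllvA A by rw [hin]; rfl]
            exact h'
  · intro xs x X ih v h
    rw [qSwapAbs_qAbs, qAllvA_qAbs] at h
    rw [qAllvA_qAbs]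
    rcases h with h | h
    · rcases key xs x v h with h' | h' | h'
      · exact Or.inl h'
      · exact Or.inr (Or.inl h')
      · exact Or.inr (Or.inr (Set.mem_union_left _ (h' ▸ rfl)))
    · rcases ih v h with h' | h' | h'
      · exact Or.inl h'
      · exact Or.inr (Or.inl h')
      · exact Or.inr (Or.inr (Set.mem_union_right _ h'))

theorem bv_swap (z1 z2 : var) (zs : varsort) :
    (∀ X : QTerm var varsort index bindex opsym, ∀ v,
      v ∈ bv (qSwap z1 z2 zs X) → ∃ w ∈ bv X, v = w ∨ v = swapVar var z1 z2 w) ∧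
    (∀ A : QAbs var varsort index bindex opsym, ∀ v,
      v ∈ bvA (qSwapAbs z1 z2 zs A) → ∃ w ∈ bvA A, v = w ∨ v = swapVar var z1 z2 w) := by
  apply qind
  · intro xs x v h
    rw [qSwap_qVar, bv_qVar] at h
    cases h
  · intro d inp binp ih1 ih2 v h
    rw [qSwap_qOp, bv_qOp] at h
    rcases h with h | h
    · obtain ⟨i, hi⟩ := Set.mem_iUnion.1 h
      have hi2 : v ∈ bvo ((inp i).map (qSwap z1 z2 zs)) := hi
      cases hin : inp i with
      | none => rw [hin] at hi2; cases hi2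
      | some X =>
          rw [hin] at hi2
          obtain ⟨w, hw, hv⟩ := ih1 i X hin v hi2
          refine ⟨w, ?_, hv⟩
          rw [bv_qOp]
          refine Set.mem_union_left _ (Set.mem_iUnion.2 ⟨i, ?_⟩)
          rw [show bvo (inp i) = bv X by rw [hin]; rfl]
          exact hw
    · obtain ⟨j, hj⟩ := Set.mem_iUnion.1 h
      have hj2 : v ∈ bvao ((binp j).map (qSwapAbs z1 z2 zs)) := hj
      cases hin : binp j with
      | none => rw [hin] at hj2; cases hj2
      | some A =>
          rw [hin] at hj2
          obtain ⟨w, hw, hv⟩ := ih2 j A hin v hj2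
          refine ⟨w, ?_, hv⟩
          rw [bv_qOp]
          refine Set.mem_union_right _ (Set.mem_iUnion.2 ⟨j, ?_⟩)
          rw [show bvao (binp j) = bvA A by rw [hin]; rfl]
          exact hw
  · intro xs x X ih v h
    rw [qSwapAbs_qAbs, bvA_qAbs] at h
    rcases h with h | h
    · refine ⟨x, by rw [bvA_qAbs]; exact Set.mem_union_left _ rfl, ?_⟩
      rcases h with h
      by_cases hzs : xs = zs
      · exact Or.inr (by rw [show v = swapVarS var varsort zs xs z1 z2 x from h, swapVarS, if_pos hzs])
      · exact Or.inl (by rw [show v = swapVarS var varsort zs xs z1 z2 x from h, swapVarS, if_neg hzs])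
    · obtain ⟨w, hw, hv⟩ := ih v h
      exact ⟨w, by rw [bvA_qAbs]; exact Set.mem_union_right _ hw, hv⟩

theorem bv_subset_allv :
    (∀ X : QTerm var varsort index bindex opsym, bv X ⊆ qAllv X) ∧
    (∀ A : QAbs var varsort index bindex opsym, bvA A ⊆ qAllvA A) := by
  apply qind
  · intro xs x
    rw [bv_qVar]
    exact Set.empty_subset _
  · intro d inp binp ih1 ih2
    rw [bv_qOp, qAllv_qOp]
    apply Set.union_subset_union
    · refine Set.iUnion_mono fun i => ?_
      cases h : inp i with
      | none => exact Set.empty_subset _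
      | some X => exact ih1 i X h
    · refine Set.iUnion_mono fun j => ?_
      cases h : binp j with
      | none => exact Set.empty_subset _
      | some A => exact ih2 j A h
  · intro xs x X ih
    rw [bvA_qAbs, qAllvA_qAbs]
    exact Set.union_subset_union (le_refl _) ih

/-! ### Soundness: alpha-equivalent quasiterms have equal translations -/

theorem swf_inj (zs : varsort) (z1 z2 : var) :
    ∀ (s : varsort) (a b : var), swf zs z1 z2 s a = swf zs z1 z2 s b → a = b :=
  fun _ _ _ h => swapVarS_inj h

theorem dclose_db_swap {xs : varsort} {x y : var} (hxy : x ≠ y)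
    {X : QTerm var varsort index bindex opsym} (hfX : (xs, y) ∉ dFVd (db X [])) :
    dclose (xs, y) 0 (db (qSwap y x xs X) []) = db X [(xs, x)] := by
  have h1 : db (qSwap y x xs X) [] = dmapFree (swf xs y x) (db X []) := by
    simpa using (db_swap y x xs).1 X []
  have hyx : swf xs y x xs x = y := by
    simp [swf, swapVarS, swapVar, hxy]
  have e1 : dmapFree (swf xs y x) (dclose (xs, x) 0 (db X []))
      = dclose (xs, y) 0 (dmapFree (swf xs y x) (db X [])) := by
    have := dmapFree_dclose (swf_inj xs y x) (xs, x) 0 (db X [])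
    rwa [show ((xs, x) : varsort × var).1 = xs from rfl,
      show ((xs, x) : varsort × var).2 = x from rfl, hyx] at this
  have e2 : dmapFree (swf xs y x) (dclose (xs, x) 0 (db X []))
      = dclose (xs, x) 0 (db X []) := by
    refine dmapFree_eq_self _ fun p hp => ?_
    have hsub := dFVd_dclose (xs, x) 0 (db X []) hp
    have hne1 : p ≠ (xs, x) := hsub.2
    have hne2 : p ≠ (xs, y) := fun hc => hfX (hc ▸ hsub.1)
    simp only [swf, swapVarS]
    by_cases hp1 : p.1 = xs
    · rw [if_pos hp1, swapVar]
      have hpy : p.2 ≠ y := fun hc => hne2 (Prod.ext hp1 hc)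
      have hpx : p.2 ≠ x := fun hc => hne1 (Prod.ext hp1 hc)
      rw [if_neg hpy, if_neg hpx]
    · rw [if_neg hp1]
  rw [h1, ← e1, e2, ← db_cons_close (by simp) X]

theorem alpha_sound :
    (∀ X X' : QTerm var varsort index bindex opsym, Alpha X X' → db X [] = db X' []) ∧
    (∀ A A' : QAbs var varsort index bindex opsym, AlphaAbs A A' → dbA A [] = dbA A' []) := by
  have pVar : ∀ (xs : varsort) (x : var),
      db (QTerm.qVar (index := index) (bindex := bindex) (opsym := opsym) xs x) []
        = db (QTerm.qVar xs x) [] := fun _ _ => rfl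
  have pOp : ∀ (d : opsym) (inp inp' : index → Option (QTerm var varsort index bindex opsym))
      (binp binp' : bindex → Option (QAbs var varsort index bindex opsym)),
      (∀ i, inp i = none ↔ inp' i = none) →
      (∀ j, binp j = none ↔ binp' j = none) →
      (∀ i X X', inp i = some X → inp' i = some X' → db X [] = db X' []) →
      (∀ j A A', binp j = some A → binp' j = some A' → dbA A [] = dbA A' []) →
      db (QTerm.qOp d inp binp) [] = db (QTerm.qOp d inp' binp') [] := by
    intro d inp inp' binp binp' hni hnj ih1 ih2
    rw [db_qOp, db_qOp]
    congr 1
    · funext i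
      cases h : inp i with
      | none => rw [show inp' i = none from (hni i).1 h]
      | some X =>
          cases h' : inp' i with
          | none =>
              rw [(hni i).2 h'] at h
              cases h
          | some X' => exact ih1 i X X' h h'
    · funext j
      cases h : binp j with
      | none => rw [show binp' j = none from (hnj j).1 h]
      | some A =>
          cases h' : binp' j with
          | none =>
              rw [(hnj j).2 h'] at h
              cases h
          | some A' => exact ih2 j A A' h h'
  have pAbs : ∀ (xs : varsort) (x x' y : var)
      (X X' : QTerm var varsort index bindex opsym), y ∉ ({x, x'} : Set var) →
      QFresh xs y X → QFresh xs y X' →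
      db (qSwap y x xs X) [] = db (qSwap y x' xs X') [] →
      dbA (QAbs.qAbs xs x X) [] = dbA (QAbs.qAbs xs x' X') [] := by
    intro xs x x' y X X' hy hfX hfX' ih
    have hyx : x ≠ y := fun hc => hy (by rw [hc]; exact Set.mem_insert y _)
    have hyx' : x' ≠ y := fun hc => hy (by rw [hc]; right; rfl)
    rw [dbA_qAbs, dbA_qAbs]
    congr 1
    rw [← dclose_db_swap hyx (fresh_not_free.1 xs y X hfX []),
      ← dclose_db_swap hyx' (fresh_not_free.1 xs y X' hfX' []), ih]
  constructor
  · intro X X' h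
    refine Alpha.rec (motive_1 := fun X X' _ => db X [] = db X' [])
      (motive_2 := fun A A' _ => dbA A [] = dbA A' []) ?_ ?_ ?_ h
    · intro xs x; exact pVar xs x
    · intro d inp binp inp' binp' hni _ hnj _ ih1 ih2
      exact pOp d inp inp' binp binp' hni hnj ih1 ih2
    · intro xs x x' X X' y hy hfX hfX' _ ih
      exact pAbs xs x x' y X X' hy hfX hfX' ih
  · intro A A' h
    refine AlphaAbs.rec (motive_1 := fun X X' _ => db X [] = db X' [])
      (motive_2 := fun A A' _ => dbA A [] = dbA A' []) ?_ ?_ ?_ h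
    · intro xs x; exact pVar xs x
    · intro d inp binp inp' binp' hni _ hnj _ ih1 ih2
      exact pOp d inp inp' binp binp' hni hnj ih1 ih2
    · intro xs x x' X X' y hy hfX hfX' _ ih
      exact pAbs xs x x' y X X' hy hfX hfX' ih

/-! ### Completeness: good quasiterms with equal translations are alpha-equivalent -/

/-- Iterated swaps. -/
noncomputable def piApp : List (var × var × varsort) →
    QTerm var varsort index bindex opsym → QTerm var varsort index bindex opsym
  | [], X => X
  | s :: π, X => qSwap s.1 s.2.1 s.2.2 (piApp π X)

noncomputable def piAppAbs : List (var × var × varsort) →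
    QAbs var varsort index bindex opsym → QAbs var varsort index bindex opsym
  | [], A => A
  | s :: π, A => qSwapAbs s.1 s.2.1 s.2.2 (piAppAbs π A)

noncomputable def piV (π : List (var × var × varsort)) (xs : varsort) (v : var) : var :=
  match π with
  | [] => v
  | s :: π => swapVarS var varsort s.2.2 xs s.1 s.2.1 (piV π xs v)

theorem piApp_qVar (π : List (var × var × varsort)) (xs : varsort) (x : var) :
    piApp (index := index) (bindex := bindex) (opsym := opsym) π (.qVar xs x)
      = .qVar xs (piV π xs x) := by
  induction π with
  | nil => rfl
  | cons s π ih => rw [piApp, ih, qSwap_qVar]; rfl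

theorem piApp_qOp (π : List (var × var × varsort)) (d : opsym)
    (inp : index → Option (QTerm var varsort index bindex opsym))
    (binp : bindex → Option (QAbs var varsort index bindex opsym)) :
    piApp π (.qOp d inp binp)
      = .qOp d (fun i => (inp i).map (piApp π)) (fun j => (binp j).map (piAppAbs π)) := by
  induction π with
  | nil =>
      show QTerm.qOp d inp binp = _
      congr 1
      · funext i; cases inp i <;> rfl
      · funext j; cases binp j <;> rfl
  | cons s π ih =>
      rw [piApp, ih, qSwap_qOp]
      congr 1
      · funext i; rw [Option.map_map]; rfl
      · funext j; rw [Option.map_map]; rfl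

theorem piAppAbs_qAbs (π : List (var × var × varsort)) (xs : varsort) (x : var)
    (X : QTerm var varsort index bindex opsym) :
    piAppAbs π (.qAbs xs x X) = .qAbs xs (piV π xs x) (piApp π X) := by
  induction π with
  | nil => rfl
  | cons s π ih => rw [piAppAbs, ih, qSwapAbs_qAbs]; rfl

theorem piApp_good (π : List (var × var × varsort))
    {X : QTerm var varsort index bindex opsym} (h : QGood X) : QGood (piApp π X) := by
  induction π with
  | nil => exact h
  | cons s π ih => exact qSwap_good _ _ _ ih

theorem piAppAbs_good (π : List (var × var × varsort))
    {A : QAbs var varsort index bindex opsym} (h : QGoodAbs A) : QGoodAbs (piAppAbs π A) := by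
  induction π with
  | nil => exact h
  | cons s π ih => exact qSwapAbs_good _ _ _ ih

theorem lookup_ne_dNone (xs : varsort) (x : var) (c : List (varsort × var)) (n : ℕ) :
    lookupCtx (index := index) (bindex := bindex) (opsym := opsym) xs x c n ≠ .dNone := by
  induction c generalizing n with
  | nil => simp [lookupCtx]
  | cons p c ih =>
      rw [lookupCtx_cons]
      by_cases hp : p = (xs, x)
      · simp [hp]
      · rw [if_neg hp]; exact ih (n+1)

theorem db_ne_dNone (X : QTerm var varsort index bindex opsym) (ctx : List (varsort × var)) :
    db X ctx ≠ .dNone := by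
  cases X with
  | qVar xs x => exact lookup_ne_dNone xs x ctx 0
  | qOp d inp binp => rw [db_qOp]; simp

theorem alpha_complete (hinf : Cardinal.aleph0 ≤ Cardinal.mk var)
    (hreg : (Cardinal.mk var).IsRegular) :
    (∀ X X' : QTerm var varsort index bindex opsym, QGood X → QGood X' →
      db X [] = db X' [] → Alpha X X') ∧
    (∀ A A' : QAbs var varsort index bindex opsym, QGoodAbs A → QGoodAbs A' →
      dbA A [] = dbA A' [] → AlphaAbs A A') := by
  have main := qind
    (m1 := fun Xb : QTerm var varsort index bindex opsym => ∀ π X',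
      QGood (piApp π Xb) → QGood X' → db (piApp π Xb) [] = db X' [] → Alpha (piApp π Xb) X')
    (m2 := fun Ab : QAbs var varsort index bindex opsym => ∀ π A',
      QGoodAbs (piAppAbs π Ab) → QGoodAbs A' → dbA (piAppAbs π Ab) [] = dbA A' [] →
        AlphaAbs (piAppAbs π Ab) A')
    (hvar := by
      intro xs x π X' hg hg' hdb
      rw [piApp_qVar] at hdb ⊢
      cases X' with
      | qVar xs' x'' =>
          rw [db_qVar, db_qVar] at hdb
          simp only [lookupCtx] at hdb
          cases hdb
          exact Alpha.qVar
      | qOp d' inp' binp' =>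
          rw [db_qVar, db_qOp] at hdb
          simp [lookupCtx] at hdb)
    (hop := by
      intro d inp binp ih1 ih2 π X' hg hg' hdb
      rw [piApp_qOp] at hdb hg ⊢
      cases X' with
      | qVar xs' x'' =>
          rw [db_qVar, db_qOp] at hdb
          simp [lookupCtx] at hdb
      | qOp d' inp' binp' =>
          rw [db_qOp, db_qOp] at hdb
          rw [DBT.dOp.injEq] at hdb
          obtain ⟨hd, hfi, hfj⟩ := hdb
          subst hd
          cases hg with | qOp hg1 hg2 _ _ =>
          cases hg' with | qOp hg1' hg2' _ _ =>
          refine Alpha.qOp ?_ ?_ ?_ ?_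
          · intro i
            have := congrFun hfi i
            constructor
            · intro hn
              simp only [hn, Option.map_none] at this
              cases h' : inp' i with
              | none => rfl
              | some X0 =>
                  rw [h'] at this
                  exact absurd (show db X0 [] = DBT.dNone from this.symm) (db_ne_dNone X0 [])
            · intro hn
              rw [hn] at this
              cases h : inp i with
              | none => rfl
              | some X0 =>
                  rw [h] at this
                  exact absurd (show db (piApp π X0) [] = DBT.dNone from by
                    simpa [dbo] using this) (db_ne_dNone _ [])
          · intro i X X'' hX hX''
            cases h : inp i with
            | none => rw [h] at hX; cases hX
            | some X0 =>
                rw [h] at hX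
                rw [Option.map_eq_some_iff] at hX
                obtain ⟨X1, hX1, hX2⟩ := hX
                cases hX1
                subst hX2
                have := congrFun hfi i
                rw [h, hX''] at this
                refine ih1 i X0 h π X'' ?_ ?_ (by simpa [dbo] using this)
                · exact hg1 i _ (by simp [h])
                · exact hg1' i _ hX''
          · intro j
            have := congrFun hfj j
            constructor
            · intro hn
              simp only [hn, Option.map_none] at this
              cases h' : binp' j with
              | none => rfl
              | some A0 =>
                  rw [h'] at this
                  cases A0 with
                  | qAbs _ _ _ => simp [dbao, dbA_qAbs] at this
            · intro hn
              rw [hn] at this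
              cases h : binp j with
              | none => rfl
              | some A0 =>
                  rw [h] at this
                  cases hA0 : piAppAbs π A0 with
                  | qAbs _ _ _ =>
                      simp only [Option.map_some] at this
                      rw [show dbao (some (piAppAbs π A0)) [] = dbA (piAppAbs π A0) [] from rfl,
                        hA0, dbA_qAbs] at this
                      simp [dbao] at this
          · intro j A A'' hA hA''
            cases h : binp j with
            | none => rw [h] at hA; cases hA
            | some A0 =>
                rw [h] at hA
                rw [Option.map_eq_some_iff] at hA
                obtain ⟨A1, hA1, hA2⟩ := hA
                cases hA1
                subst hA2
                have := congrFun hfj j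
                rw [h, hA''] at this
                refine ih2 j A0 h π A'' ?_ ?_ (by simpa [dbao] using this)
                · exact hg2 j _ (by simp [h])
                · exact hg2' j _ hA'')
    (habs := by
      intro xs x Xb ih π A' hg hg' hdb
      rw [piAppAbs_qAbs] at hdb hg ⊢
      cases A' with
      | qAbs xs' x' X' =>
          rw [dbA_qAbs, dbA_qAbs] at hdb
          rw [DBT.dAbs.injEq] at hdb
          obtain ⟨hxs, hT⟩ := hdb
          subst hxs
          cases hg with | qAbs hgX =>
          cases hg' with | qAbs hgX' =>
          set Xt := piApp π Xb with hXt
          set xt := piV π xs x with hxt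
          -- choose a fresh u
          have hsmall : Cardinal.mk ↥(qAllv Xt ∪ qAllv X' ∪ {xt} ∪ {x'}) < Cardinal.mk var := by
            refine small_two_union hinf (small_two_union hinf (small_two_union hinf ?_ ?_)
              (small_singleton hinf xt)) (small_singleton hinf x')
            · exact (good_allv_small hinf hreg).1 Xt hgX
            · exact (good_allv_small hinf hreg).1 X' hgX'
          obtain ⟨u, hu⟩ := exists_fresh_var hsmall
          have huXt : u ∉ qAllv Xt := fun hc => hu (by left; left; left; exact hc)
          have huX' : u ∉ qAllv X' := fun hc => hu (by left; left; right; exact hc)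
          have huxt : u ≠ xt := fun hc => hu (by left; right; exact hc)
          have hux' : u ≠ x' := fun hc => hu (by right; exact hc)
          have hfXt : QFresh xs u Xt := fresh_of_not_allv.1 Xt xs u huXt
          have hfX' : QFresh xs u X' := fresh_of_not_allv.1 X' xs u huX'
          have hnfXt : (xs, u) ∉ dFVd (db Xt []) :=
            fun hc => huXt (dFVd_db_allv.1 Xt [] (xs, u) hc)
          have hnfX' : (xs, u) ∉ dFVd (db X' []) :=
            fun hc => huX' (dFVd_db_allv.1 X' [] (xs, u) hc)
          have e1 : dclose (xs, u) 0 (db (qSwap u xt xs Xt) []) = db Xt [(xs, xt)] :=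
            dclose_db_swap (Ne.symm huxt) hnfXt
          have e2 : dclose (xs, u) 0 (db (qSwap u x' xs X') []) = db X' [(xs, x')] :=
            dclose_db_swap (Ne.symm hux') hnfX'
          have e3 : db (qSwap u xt xs Xt) [] = db (qSwap u x' xs X') [] := by
            have : dclose (xs, u) 0 (db (qSwap u xt xs Xt) [])
                = dclose (xs, u) 0 (db (qSwap u x' xs X') []) := by rw [e1, e2, hT]
            have := congrArg (dopen (xs, u) 0) this
            rwa [dopen_dclose, dopen_dclose] at this
          have halpha : Alpha (qSwap u xt xs Xt) (qSwap u x' xs X') := by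
            have := ih ((u, xt, xs) :: π) (qSwap u x' xs X')
              (by rw [show piApp ((u, xt, xs) :: π) Xb = qSwap u xt xs Xt from rfl]
                  exact qSwap_good _ _ _ (hXt ▸ hgX))
              (qSwap_good _ _ _ hgX') (by
                rw [show piApp ((u, xt, xs) :: π) Xb = qSwap u xt xs Xt from rfl]
                exact e3)
            rwa [show piApp ((u, xt, xs) :: π) Xb = qSwap u xt xs Xt from rfl] at this
          exact AlphaAbs.qAbs (y := u)
            (by intro hc
                rcases hc with hc | hc
                · exact huxt hc
                · exact hux' hc)
            hfXt hfX' halpha)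
  constructor
  · intro X X' hg hg' hdb
    exact main.1 X [] X' hg hg' hdb
  · intro A A' hg hg' hdb
    exact main.2 A [] A' hg hg' hdb

/-! ### Goodness transfer along alpha-equivalence -/

theorem alpha_good :
    (∀ X X' : QTerm var varsort index bindex opsym, Alpha X X' → (QGood X ↔ QGood X')) ∧
    (∀ A A' : QAbs var varsort index bindex opsym, AlphaAbs A A' → (QGoodAbs A ↔ QGoodAbs A')) := by
  have pVar : ∀ (xs : varsort) (x : var),
      (QGood (QTerm.qVar (index := index) (bindex := bindex) (opsym := opsym) xs x)
        ↔ QGood (QTerm.qVar xs x)) := fun _ _ => Iff.rfl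
  have pOp : ∀ (d : opsym) (inp inp' : index → Option (QTerm var varsort index bindex opsym))
      (binp binp' : bindex → Option (QAbs var varsort index bindex opsym)),
      (∀ i, inp i = none ↔ inp' i = none) →
      (∀ j, binp j = none ↔ binp' j = none) →
      (∀ i X X', inp i = some X → inp' i = some X' → (QGood X ↔ QGood X')) →
      (∀ j A A', binp j = some A → binp' j = some A' → (QGoodAbs A ↔ QGoodAbs A')) →
      (QGood (QTerm.qOp d inp binp) ↔ QGood (QTerm.qOp d inp' binp')) := by
    intro d inp inp' binp binp' hni hnj ih1 ih2
    have hdom1 : idom inp = idom inp' := by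
      ext a
      simp only [idom, Set.mem_setOf_eq, ne_eq, not_iff_not]
      exact hni a
    have hdom2 : idom binp = idom binp' := by
      ext a
      simp only [idom, Set.mem_setOf_eq, ne_eq, not_iff_not]
      exact hnj a
    constructor
    · intro hg
      cases hg with | qOp h1 h2 h3 h4 =>
      refine QGood.qOp ?_ ?_ ?_ ?_
      · intro i X' hX'
        cases h : inp i with
        | none => rw [(hni i).1 h] at hX'; cases hX'
        | some X => exact (ih1 i X X' h hX').1 (h1 i X h)
      · intro j A' hA'
        cases h : binp j with
        | none => rw [(hnj j).1 h] at hA'; cases hA'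
        | some A => exact (ih2 j A A' h hA').1 (h2 j A h)
      · rwa [smallDom, ← hdom1]
      · rwa [smallDom, ← hdom2]
    · intro hg
      cases hg with | qOp h1 h2 h3 h4 =>
      refine QGood.qOp ?_ ?_ ?_ ?_
      · intro i X hX
        cases h : inp' i with
        | none => rw [(hni i).2 h] at hX; cases hX
        | some X' => exact (ih1 i X X' hX h).2 (h1 i X' h)
      · intro j A hA
        cases h : binp' j with
        | none => rw [(hnj j).2 h] at hA; cases hA
        | some A' => exact (ih2 j A A' hA h).2 (h2 j A' h)
      · rwa [smallDom, hdom1]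
      · rwa [smallDom, hdom2]
  have pAbs : ∀ (xs : varsort) (x x' y : var) (X X' : QTerm var varsort index bindex opsym),
      (QGood (qSwap y x xs X) ↔ QGood (qSwap y x' xs X')) →
      (QGoodAbs (QAbs.qAbs xs x X) ↔ QGoodAbs (QAbs.qAbs xs x' X')) := by
    intro xs x x' y X X' ih
    constructor
    · intro hg
      cases hg with | qAbs hX =>
      have := ih.1 (qSwap_good y x xs hX)
      have := qSwap_good y x' xs this
      rw [(qSwap_invol y x' xs).1 X'] at this
      exact QGoodAbs.qAbs this
    · intro hg
      cases hg with | qAbs hX =>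
      have := ih.2 (qSwap_good y x' xs hX)
      have := qSwap_good y x xs this
      rw [(qSwap_invol y x xs).1 X] at this
      exact QGoodAbs.qAbs this
  constructor
  · intro X X' h
    refine Alpha.rec (motive_1 := fun X X' _ => QGood X ↔ QGood X')
      (motive_2 := fun A A' _ => QGoodAbs A ↔ QGoodAbs A') ?_ ?_ ?_ h
    · intro xs x; exact pVar xs x
    · intro d inp binp inp' binp' hni _ hnj _ ih1 ih2
      exact pOp d inp inp' binp binp' hni hnj ih1 ih2
    · intro xs x x' X X' y _ _ _ _ ih
      exact pAbs xs x x' y X X' ih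
  · intro A A' h
    refine AlphaAbs.rec (motive_1 := fun X X' _ => QGood X ↔ QGood X')
      (motive_2 := fun A A' _ => QGoodAbs A ↔ QGoodAbs A') ?_ ?_ ?_ h
    · intro xs x; exact pVar xs x
    · intro d inp binp inp' binp' hni _ hnj _ ih1 ih2
      exact pOp d inp inp' binp binp' hni hnj ih1 ih2
    · intro xs x x' X X' y _ _ _ _ ih
      exact pAbs xs x x' y X X' ih

/-! ### Transfer along the quotient -/

theorem mk_eq_transfer {X X' : QTerm var varsort index bindex opsym}
    (h : tmk X = tmk X') : (QGood X ↔ QGood X') ∧ db X [] = db X' [] := by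
  have he : Relation.EqvGen (@Alpha var varsort index bindex opsym) X X' :=
    Quot.eqvGen_exact h
  clear h
  induction he with
  | rel a b hab => exact ⟨alpha_good.1 a b hab, alpha_sound.1 a b hab⟩
  | refl a => exact ⟨Iff.rfl, rfl⟩
  | symm a b _ ih => exact ⟨ih.1.symm, ih.2.symm⟩
  | trans a b c _ _ ih1 ih2 => exact ⟨ih1.1.trans ih2.1, ih1.2.trans ih2.2⟩

theorem tmk_trep (X : Term var varsort index bindex opsym) : tmk (trep X) = X :=
  Quot.out_eq X

theorem rep_transfer {X : Term var varsort index bindex opsym}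
    {qX : QTerm var varsort index bindex opsym} (h : tmk qX = X) :
    (QGood qX ↔ good X) ∧ db qX [] = db (trep X) [] := by
  have : tmk qX = tmk (trep X) := by rw [h, tmk_trep]
  exact mk_eq_transfer this

theorem term_eq_of_db (hinf : Cardinal.aleph0 ≤ Cardinal.mk var)
    (hreg : (Cardinal.mk var).IsRegular) {Z₁ Z₂ : Term var varsort index bindex opsym}
    (h1 : good Z₁) (h2 : good Z₂) (h : db (trep Z₁) [] = db (trep Z₂) []) : Z₁ = Z₂ := by
  rw [← tmk_trep Z₁, ← tmk_trep Z₂]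
  exact Quot.sound ((alpha_complete hinf hreg).1 _ _ h1 h2 h)

/-! ### Substitution lemmas -/

theorem idom_eq_of_none_iff {α β : Type u} {inp inp' : α → Option β}
    (h : ∀ a, inp a = none ↔ inp' a = none) : idom inp = idom inp' := by
  ext a
  simp only [idom, Set.mem_setOf_eq, ne_eq, not_iff_not]
  exact h a

theorem dsubst_lookup {ys : varsort} {y : var} {xs : varsort} {x : var}
    (hne : (xs, x) ≠ (ys, y)) (T : DBT var varsort index bindex opsym)
    (c : List (varsort × var)) (n : ℕ) :
    dsubst ys y T (lookupCtx xs x c n) = lookupCtx xs x c n := by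
  induction c generalizing n with
  | nil => simp only [lookupCtx, dsubst, if_neg hne]
  | cons p c ih =>
      rw [lookupCtx_cons]
      by_cases hp : p = (xs, x)
      · rw [if_pos hp]; rfl
      · rw [if_neg hp]; exact ih (n+1)

theorem qsubst_good :
    (∀ (X Y : QTerm var varsort index bindex opsym) (y : var) (ys : varsort) Z,
      QSubst X Y y ys Z → QGood X → QGood Y → QGood Z) ∧
    (∀ (A : QAbs var varsort index bindex opsym) (Y : QTerm var varsort index bindex opsym)
      (y : var) (ys : varsort) B,
      QSubstAbs A Y y ys B → QGoodAbs A → QGood Y → QGoodAbs B) := by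
  have pOp : ∀ (Y : QTerm var varsort index bindex opsym) (y : var) (ys : varsort)
      (d : opsym) (inp inp' : index → Option (QTerm var varsort index bindex opsym))
      (binp binp' : bindex → Option (QAbs var varsort index bindex opsym)),
      (∀ i, inp i = none ↔ inp' i = none) →
      (∀ j, binp j = none ↔ binp' j = none) →
      (∀ i X X', inp i = some X → inp' i = some X' → QGood X → QGood Y → QGood X') →
      (∀ j A A', binp j = some A → binp' j = some A' → QGoodAbs A → QGood Y → QGoodAbs A') →
      QGood (QTerm.qOp d inp binp) → QGood Y → QGood (QTerm.qOp d inp' binp') := by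
    intro Y y ys d inp inp' binp binp' hni hnj ih1 ih2 hg hY
    cases hg with | qOp h1 h2 h3 h4 =>
    refine QGood.qOp ?_ ?_ ?_ ?_
    · intro i X' hX'
      cases h : inp i with
      | none => rw [(hni i).1 h] at hX'; cases hX'
      | some X => exact ih1 i X X' h hX' (h1 i X h) hY
    · intro j A' hA'
      cases h : binp j with
      | none => rw [(hnj j).1 h] at hA'; cases hA'
      | some A => exact ih2 j A A' h hA' (h2 j A h) hY
    · rwa [smallDom, ← idom_eq_of_none_iff hni]
    · rwa [smallDom, ← idom_eq_of_none_iff hnj]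
  constructor
  · intro X Y y ys Z h
    refine QSubst.rec
      (motive_1 := fun X Y y ys Z _ => QGood X → QGood Y → QGood Z)
      (motive_2 := fun A Y y ys B _ => QGoodAbs A → QGood Y → QGoodAbs B)
      ?_ ?_ ?_ ?_ h
    · intro Y y ys _ hY; exact hY
    · intro Y y ys xs x _ hg _; exact hg
    · intro Y y ys d inp binp inp' binp' hni _ hnj _ ih1 ih2 hg hY
      exact pOp Y y ys d inp inp' binp binp' hni hnj ih1 ih2 hg hY
    · intro Y y ys xs x X X' _ _ _ ih hg hY
      cases hg with | qAbs hX =>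
      exact QGoodAbs.qAbs (ih hX hY)
  · intro A Y y ys B h
    refine QSubstAbs.rec
      (motive_1 := fun X Y y ys Z _ => QGood X → QGood Y → QGood Z)
      (motive_2 := fun A Y y ys B _ => QGoodAbs A → QGood Y → QGoodAbs B)
      ?_ ?_ ?_ ?_ h
    · intro Y y ys _ hY; exact hY
    · intro Y y ys xs x _ hg _; exact hg
    · intro Y y ys d inp binp inp' binp' hni _ hnj _ ih1 ih2 hg hY
      exact pOp Y y ys d inp inp' binp binp' hni hnj ih1 ih2 hg hY
    · intro Y y ys xs x X X' _ _ _ ih hg hY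
      cases hg with | qAbs hX =>
      exact QGoodAbs.qAbs (ih hX hY)

theorem qsubst_db :
    (∀ (X Y : QTerm var varsort index bindex opsym) (y : var) (ys : varsort) Z,
      QSubst X Y y ys Z → ∀ ctx, (∀ p ∈ ctx, p ≠ (ys, y) ∧ QFresh p.1 p.2 Y) →
        db Z ctx = dsubst ys y (db Y []) (db X ctx)) ∧
    (∀ (A : QAbs var varsort index bindex opsym) (Y : QTerm var varsort index bindex opsym)
      (y : var) (ys : varsort) B,
      QSubstAbs A Y y ys B → ∀ ctx, (∀ p ∈ ctx, p ≠ (ys, y) ∧ QFresh p.1 p.2 Y) →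
        dbA B ctx = dsubst ys y (db Y []) (dbA A ctx)) := by
  have pVarEq : ∀ (Y : QTerm var varsort index bindex opsym) (y : var) (ys : varsort),
      ∀ ctx, (∀ p ∈ ctx, p ≠ (ys, y) ∧ QFresh p.1 p.2 Y) →
      db Y ctx = dsubst ys y (db Y []) (db (QTerm.qVar ys y) ctx) := by
    intro Y y ys ctx hctx
    have h1 : (ys, y) ∉ ctx := fun hc => (hctx (ys, y) hc).1 rfl
    rw [db_qVar, lookup_not_mem h1]
    rw [show dsubst ys y (db Y []) (DBT.dFree ys y) = db Y [] by
      simp [dsubst]]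
    have := db_ctx_irrel.1 Y [] ctx fun p hp => Or.inr (hctx p hp).2
    simpa using this
  have pVarNe : ∀ (Y : QTerm var varsort index bindex opsym) (y : var) (ys xs : varsort)
      (x : var), (xs, x) ≠ (ys, y) → ∀ ctx,
      db (QTerm.qVar (index := index) (bindex := bindex) (opsym := opsym) xs x) ctx
        = dsubst ys y (db Y []) (db (QTerm.qVar xs x) ctx) := by
    intro Y y ys xs x hne ctx
    rw [db_qVar, dsubst_lookup hne]
  have pOp : ∀ (Y : QTerm var varsort index bindex opsym) (y : var) (ys : varsort)
      (d : opsym) (inp inp' : index → Option (QTerm var varsort index bindex opsym))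
      (binp binp' : bindex → Option (QAbs var varsort index bindex opsym)),
      (∀ i, inp i = none ↔ inp' i = none) →
      (∀ j, binp j = none ↔ binp' j = none) →
      (∀ i X X', inp i = some X → inp' i = some X' →
        ∀ ctx, (∀ p ∈ ctx, p ≠ (ys, y) ∧ QFresh p.1 p.2 Y) →
        db X' ctx = dsubst ys y (db Y []) (db X ctx)) →
      (∀ j A A', binp j = some A → binp' j = some A' →
        ∀ ctx, (∀ p ∈ ctx, p ≠ (ys, y) ∧ QFresh p.1 p.2 Y) →
        dbA A' ctx = dsubst ys y (db Y []) (dbA A ctx)) →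
      ∀ ctx, (∀ p ∈ ctx, p ≠ (ys, y) ∧ QFresh p.1 p.2 Y) →
      db (QTerm.qOp d inp' binp') ctx = dsubst ys y (db Y []) (db (QTerm.qOp d inp binp) ctx) := by
    intro Y y ys d inp inp' binp binp' hni hnj ih1 ih2 ctx hctx
    rw [db_qOp, db_qOp]
    simp only [dsubst]
    congr 1
    · funext i
      cases h : inp i with
      | none => rw [(hni i).1 h]; rfl
      | some X =>
          cases h' : inp' i with
          | none => rw [(hni i).2 h'] at h; cases h
          | some X' => exact ih1 i X X' h h' ctx hctx
    · funext j
      cases h : binp j with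
      | none => rw [(hnj j).1 h]; rfl
      | some A =>
          cases h' : binp' j with
          | none => rw [(hnj j).2 h'] at h; cases h
          | some A' => exact ih2 j A A' h h' ctx hctx
  have pAbs : ∀ (Y : QTerm var varsort index bindex opsym) (y : var) (ys xs : varsort)
      (x : var) (X X' : QTerm var varsort index bindex opsym),
      (xs, x) ≠ (ys, y) → QFresh xs x Y →
      (∀ ctx, (∀ p ∈ ctx, p ≠ (ys, y) ∧ QFresh p.1 p.2 Y) →
        db X' ctx = dsubst ys y (db Y []) (db X ctx)) →
      ∀ ctx, (∀ p ∈ ctx, p ≠ (ys, y) ∧ QFresh p.1 p.2 Y) →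
      dbA (QAbs.qAbs xs x X') ctx = dsubst ys y (db Y []) (dbA (QAbs.qAbs xs x X) ctx) := by
    intro Y y ys xs x X X' hne hfr ih ctx hctx
    rw [dbA_qAbs, dbA_qAbs]
    simp only [dsubst]
    congr 1
    refine ih ((xs, x) :: ctx) fun p hp => ?_
    rcases List.mem_cons.1 hp with hp | hp
    · exact hp ▸ ⟨hne, hfr⟩
    · exact hctx p hp
  constructor
  · intro X Y y ys Z h
    refine QSubst.rec
      (motive_1 := fun X Y y ys Z _ => ∀ ctx, (∀ p ∈ ctx, p ≠ (ys, y) ∧ QFresh p.1 p.2 Y) →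
        db Z ctx = dsubst ys y (db Y []) (db X ctx))
      (motive_2 := fun A Y y ys B _ => ∀ ctx, (∀ p ∈ ctx, p ≠ (ys, y) ∧ QFresh p.1 p.2 Y) →
        dbA B ctx = dsubst ys y (db Y []) (dbA A ctx))
      ?_ ?_ ?_ ?_ h
    · intro Y y ys; exact pVarEq Y y ys
    · intro Y y ys xs x hne; exact fun ctx _ => pVarNe Y y ys xs x hne ctx
    · intro Y y ys d inp binp inp' binp' hni _ hnj _ ih1 ih2
      exact pOp Y y ys d inp inp' binp binp' hni hnj ih1 ih2
    · intro Y y ys xs x X X' hne hfr _ ih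
      exact pAbs Y y ys xs x X X' hne hfr ih
  · intro A Y y ys B h
    refine QSubstAbs.rec
      (motive_1 := fun X Y y ys Z _ => ∀ ctx, (∀ p ∈ ctx, p ≠ (ys, y) ∧ QFresh p.1 p.2 Y) →
        db Z ctx = dsubst ys y (db Y []) (db X ctx))
      (motive_2 := fun A Y y ys B _ => ∀ ctx, (∀ p ∈ ctx, p ≠ (ys, y) ∧ QFresh p.1 p.2 Y) →
        dbA B ctx = dsubst ys y (db Y []) (dbA A ctx))
      ?_ ?_ ?_ ?_ h
    · intro Y y ys; exact pVarEq Y y ys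
    · intro Y y ys xs x hne; exact fun ctx _ => pVarNe Y y ys xs x hne ctx
    · intro Y y ys d inp binp inp' binp' hni _ hnj _ ih1 ih2
      exact pOp Y y ys d inp inp' binp binp' hni hnj ih1 ih2
    · intro Y y ys xs x X X' hne hfr _ ih
      exact pAbs Y y ys xs x X X' hne hfr ih

/-! ### Renaming binders away from a bad set -/

theorem rename_binders (hinf : Cardinal.aleph0 ≤ Cardinal.mk var)
    (hreg : (Cardinal.mk var).IsRegular) :
    (∀ X : QTerm var varsort index bindex opsym, QGood X →
      ∀ badv : Set var, Cardinal.mk badv < Cardinal.mk var →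
      ∃ X', QGood X' ∧ Alpha X X' ∧ ∀ v ∈ bv X', v ∉ badv) ∧
    (∀ A : QAbs var varsort index bindex opsym, QGoodAbs A →
      ∀ badv : Set var, Cardinal.mk badv < Cardinal.mk var →
      ∃ A', QGoodAbs A' ∧ AlphaAbs A A' ∧ ∀ v ∈ bvA A', v ∉ badv) := by
  apply qind
    (m1 := fun X : QTerm var varsort index bindex opsym => QGood X →
      ∀ badv : Set var, Cardinal.mk badv < Cardinal.mk var →
      ∃ X', QGood X' ∧ Alpha X X' ∧ ∀ v ∈ bv X', v ∉ badv)
    (m2 := fun A : QAbs var varsort index bindex opsym => QGoodAbs A →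
      ∀ badv : Set var, Cardinal.mk badv < Cardinal.mk var →
      ∃ A', QGoodAbs A' ∧ AlphaAbs A A' ∧ ∀ v ∈ bvA A', v ∉ badv)
  · intro xs x hg badv _
    exact ⟨.qVar xs x, QGood.qVar, Alpha.qVar, by rw [bv_qVar]; intro v hv; cases hv⟩
  · intro d inp binp ih1 ih2 hg badv hsmall
    cases hg with | qOp h1 h2 h3 h4 =>
    have hex1 : ∀ i, ∃ o', (inp i = none ∧ o' = none) ∨
        ∃ X X'', inp i = some X ∧ o' = some X'' ∧ QGood X'' ∧ Alpha X X'' ∧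
          ∀ v ∈ bv X'', v ∉ badv := by
      intro i
      cases h : inp i with
      | none => exact ⟨none, Or.inl ⟨rfl, rfl⟩⟩
      | some X =>
          obtain ⟨X'', hX''⟩ := ih1 i X h (h1 i X h) badv hsmall
          exact ⟨some X'', Or.inr ⟨X, X'', rfl, rfl, hX''.1, hX''.2.1, hX''.2.2⟩⟩
    have hex2 : ∀ j, ∃ o', (binp j = none ∧ o' = none) ∨
        ∃ A A'', binp j = some A ∧ o' = some A'' ∧ QGoodAbs A'' ∧ AlphaAbs A A'' ∧
          ∀ v ∈ bvA A'', v ∉ badv := by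
      intro j
      cases h : binp j with
      | none => exact ⟨none, Or.inl ⟨rfl, rfl⟩⟩
      | some A =>
          obtain ⟨A'', hA''⟩ := ih2 j A h (h2 j A h) badv hsmall
          exact ⟨some A'', Or.inr ⟨A, A'', rfl, rfl, hA''.1, hA''.2.1, hA''.2.2⟩⟩
    choose f hf using hex1
    choose g hg2 using hex2
    have hni : ∀ i, inp i = none ↔ f i = none := by
      intro i
      rcases hf i with ⟨h1', h2'⟩ | ⟨X, X'', hX, hX'', _⟩
      · simp [h1', h2']
      · simp [hX, hX'']
    have hnj : ∀ j, binp j = none ↔ g j = none := by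
      intro j
      rcases hg2 j with ⟨h1', h2'⟩ | ⟨A, A'', hA, hA'', _⟩
      · simp [h1', h2']
      · simp [hA, hA'']
    refine ⟨.qOp d f g, ?_, ?_, ?_⟩
    · refine QGood.qOp ?_ ?_ ?_ ?_
      · intro i X' hX'
        rcases hf i with ⟨_, h2'⟩ | ⟨X, X'', _, hX'', hgood, _⟩
        · rw [h2'] at hX'; cases hX'
        · rw [hX''] at hX'; cases hX'; exact hgood
      · intro j A' hA'
        rcases hg2 j with ⟨_, h2'⟩ | ⟨A, A'', _, hA'', hgood, _⟩
        · rw [h2'] at hA'; cases hA'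
        · rw [hA''] at hA'; cases hA'; exact hgood
      · rwa [smallDom, ← idom_eq_of_none_iff hni]
      · rwa [smallDom, ← idom_eq_of_none_iff hnj]
    · refine Alpha.qOp hni ?_ hnj ?_
      · intro i X X'' hX hX''
        rcases hf i with ⟨h1', _⟩ | ⟨X0, X0'', hX0, hX0'', _, halpha, _⟩
        · rw [h1'] at hX; cases hX
        · rw [hX0] at hX; cases hX
          rw [hX0''] at hX''; cases hX''
          exact halpha
      · intro j A A'' hA hA''
        rcases hg2 j with ⟨h1', _⟩ | ⟨A0, A0'', hA0, hA0'', _, halpha, _⟩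
        · rw [h1'] at hA; cases hA
        · rw [hA0] at hA; cases hA
          rw [hA0''] at hA''; cases hA''
          exact halpha
    · intro v hv
      rw [bv_qOp] at hv
      rcases hv with hv | hv
      · obtain ⟨i, hi⟩ := Set.mem_iUnion.1 hv
        have hi2 : v ∈ bvo (f i) := hi
        rcases hf i with ⟨_, h2'⟩ | ⟨X, X'', _, hX'', _, _, hbv⟩
        · rw [h2'] at hi2; cases hi2
        · rw [hX''] at hi2; exact hbv v hi2
      · obtain ⟨j, hj⟩ := Set.mem_iUnion.1 hv
        have hj2 : v ∈ bvao (g j) := hj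
        rcases hg2 j with ⟨_, h2'⟩ | ⟨A, A'', _, hA'', _, _, hbv⟩
        · rw [h2'] at hj2; cases hj2
        · rw [hA''] at hj2; exact hbv v hj2
  · intro xs x Xb ih hg badv hsmall
    cases hg with | qAbs hgXb =>
    obtain ⟨Xb', hgXb', halpha, hbv⟩ := ih hgXb badv hsmall
    have hsmall2 : Cardinal.mk ↥(badv ∪ qAllv Xb' ∪ {x}) < Cardinal.mk var := by
      refine small_two_union hinf (small_two_union hinf hsmall ?_) (small_singleton hinf x)
      exact (good_allv_small hinf hreg).1 Xb' hgXb'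
    obtain ⟨z, hz⟩ := exists_fresh_var hsmall2
    have hzbad : z ∉ badv := fun hc => hz (by left; left; exact hc)
    have hzallv : z ∉ qAllv Xb' := fun hc => hz (by left; right; exact hc)
    have hzx : z ≠ x := fun hc => hz (by right; exact hc)
    have hnf : (xs, z) ∉ dFVd (db Xb' []) := fun hc => hzallv (dFVd_db_allv.1 Xb' [] _ hc)
    refine ⟨.qAbs xs z (qSwap z x xs Xb'), QGoodAbs.qAbs (qSwap_good z x xs hgXb'), ?_, ?_⟩
    · refine (alpha_complete hinf hreg).2 _ _ (QGoodAbs.qAbs hgXb)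
        (QGoodAbs.qAbs (qSwap_good z x xs hgXb')) ?_
      rw [dbA_qAbs, dbA_qAbs]
      congr 1
      have e1 : db (qSwap z x xs Xb') [(xs, z)] = dclose (xs, z) 0 (db (qSwap z x xs Xb') []) :=
        db_cons_close (by simp) _
      have e2 : dclose (xs, z) 0 (db (qSwap z x xs Xb') []) = db Xb' [(xs, x)] :=
        dclose_db_swap (fun hc => hzx hc.symm) hnf
      have e3 : db Xb' [(xs, x)] = dclose (xs, x) 0 (db Xb' []) := db_cons_close (by simp) _
      have e4 : db Xb [(xs, x)] = dclose (xs, x) 0 (db Xb []) := db_cons_close (by simp) _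
      rw [e1, e2, e3, e4, alpha_sound.1 Xb Xb' halpha]
    · intro v hv
      rw [bvA_qAbs] at hv
      rcases hv with hv | hv
      · cases hv; exact hzbad
      · have hex : ∃ w, w ∈ bv Xb' ∧ (v = w ∨ v = swapVar var z x w) := by
          obtain ⟨w, hw, hvw⟩ := (bv_swap z x xs).1 Xb' v hv
          exact ⟨w, hw, hvw⟩
        obtain ⟨w, hw, hvw⟩ := hex
        have hwz : w ≠ z := fun hc => hzallv (bv_subset_allv.1 Xb' (hc ▸ hw))
        rcases hvw with rfl | rfl
        · exact hbv v hw
        · intro hcon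
          have : swapVar var z x w ∈ badv := hcon
          rw [swapVar, if_neg hwz] at this
          by_cases hwx : w = x
          · rw [if_pos hwx] at this; exact hzbad this
          · rw [if_neg hwx] at this; exact hbv w hw this

/-! ### Totality of substitution for terms with good binders -/

theorem qsubst_total :
    (∀ X : QTerm var varsort index bindex opsym,
      ∀ (Y : QTerm var varsort index bindex opsym) (y : var) (ys : varsort),
      (∀ w ∈ bv X, w ≠ y ∧ w ∉ qAllv Y) → ∃ Z, QSubst X Y y ys Z) ∧
    (∀ A : QAbs var varsort index bindex opsym,
      ∀ (Y : QTerm var varsort index bindex opsym) (y : var) (ys : varsort),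
      (∀ w ∈ bvA A, w ≠ y ∧ w ∉ qAllv Y) → ∃ B, QSubstAbs A Y y ys B) := by
  apply qind
  · intro xs x Y y ys _
    by_cases h : (xs, x) = (ys, y)
    · obtain ⟨h1, h2⟩ := Prod.mk.injEq .. ▸ h
      subst h1; subst h2
      exact ⟨Y, QSubst.var_eq⟩
    · exact ⟨.qVar xs x, QSubst.var_ne h⟩
  · intro d inp binp ih1 ih2 Y y ys hbv
    have hex1 : ∀ i, ∃ o', (inp i = none ∧ o' = none) ∨
        ∃ X Z, inp i = some X ∧ o' = some Z ∧ QSubst X Y y ys Z := by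
      intro i
      cases h : inp i with
      | none => exact ⟨none, Or.inl ⟨rfl, rfl⟩⟩
      | some X =>
          obtain ⟨Z, hZ⟩ := ih1 i X h Y y ys fun w hw => hbv w (by
            rw [bv_qOp]
            refine Set.mem_union_left _ (Set.mem_iUnion.2 ⟨i, ?_⟩)
            rw [show bvo (inp i) = bv X by rw [h]; rfl]
            exact hw)
          exact ⟨some Z, Or.inr ⟨X, Z, rfl, rfl, hZ⟩⟩
    have hex2 : ∀ j, ∃ o', (binp j = none ∧ o' = none) ∨
        ∃ A B, binp j = some A ∧ o' = some B ∧ QSubstAbs A Y y ys B := by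
      intro j
      cases h : binp j with
      | none => exact ⟨none, Or.inl ⟨rfl, rfl⟩⟩
      | some A =>
          obtain ⟨B, hB⟩ := ih2 j A h Y y ys fun w hw => hbv w (by
            rw [bv_qOp]
            refine Set.mem_union_right _ (Set.mem_iUnion.2 ⟨j, ?_⟩)
            rw [show bvao (binp j) = bvA A by rw [h]; rfl]
            exact hw)
          exact ⟨some B, Or.inr ⟨A, B, rfl, rfl, hB⟩⟩
    choose f hf using hex1
    choose g hg using hex2
    refine ⟨.qOp d f g, QSubst.op ?_ ?_ ?_ ?_⟩
    · intro i
      rcases hf i with ⟨h1', h2'⟩ | ⟨X, Z, hX, hZ, _⟩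
      · simp [h1', h2']
      · simp [hX, hZ]
    · intro i X Z hX hZ
      rcases hf i with ⟨h1', _⟩ | ⟨X0, Z0, hX0, hZ0, hsub⟩
      · rw [h1'] at hX; cases hX
      · rw [hX0] at hX; cases hX
        rw [hZ0] at hZ; cases hZ
        exact hsub
    · intro j
      rcases hg j with ⟨h1', h2'⟩ | ⟨A, B, hA, hB, _⟩
      · simp [h1', h2']
      · simp [hA, hB]
    · intro j A B hA hB
      rcases hg j with ⟨h1', _⟩ | ⟨A0, B0, hA0, hB0, hsub⟩
      · rw [h1'] at hA; cases hA
      · rw [hA0] at hA; cases hA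
        rw [hB0] at hB; cases hB
        exact hsub
  · intro xs x Xb ih Y y ys hbv
    have hx := hbv x (by rw [bvA_qAbs]; exact Set.mem_union_left _ rfl)
    obtain ⟨Z, hZ⟩ := ih Y y ys fun w hw => hbv w (by
      rw [bvA_qAbs]; exact Set.mem_union_right _ hw)
    refine ⟨.qAbs xs x Z, QSubstAbs.abs ?_ ?_ hZ⟩
    · intro hc
      obtain ⟨_, h2⟩ := Prod.mk.injEq .. ▸ hc
      exact hx.1 h2
    · exact fresh_of_not_allv.1 Y xs x hx.2

/-! ### The characterization of substitution on terms -/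

theorem substRel_spec (hinf : Cardinal.aleph0 ≤ Cardinal.mk var)
    (hreg : (Cardinal.mk var).IsRegular) {X Y : Term var varsort index bindex opsym}
    (hX : good X) (hY : good Y) (y : var) (ys : varsort) :
    ∀ Z, SubstRel X Y y ys Z →
      good Z ∧ db (trep Z) [] = dsubst ys y (db (trep Y) []) (db (trep X) []) := by
  intro Z hrel
  obtain ⟨qX, qZ, hqX, hqZ, hQS⟩ := hrel
  have h1 := rep_transfer hqX
  have hgqX : QGood qX := h1.1.2 hX
  have hgqZ : QGood qZ := qsubst_good.1 qX (trep Y) y ys qZ hQS hgqX hY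
  have h2 := rep_transfer hqZ
  constructor
  · exact h2.1.1 hgqZ
  · rw [← h2.2, qsubst_db.1 qX (trep Y) y ys qZ hQS [] (by intro p hp; cases hp), h1.2]

theorem substRel_exists (hinf : Cardinal.aleph0 ≤ Cardinal.mk var)
    (hreg : (Cardinal.mk var).IsRegular) {X Y : Term var varsort index bindex opsym}
    (hX : good X) (hY : good Y) (y : var) (ys : varsort) :
    ∃ Z, SubstRel X Y y ys Z := by
  have hbad : Cardinal.mk ↥(qAllv (trep Y) ∪ {y}) < Cardinal.mk var := by
    refine small_two_union hinf ?_ (small_singleton hinf y)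
    exact (good_allv_small hinf hreg).1 (trep Y) hY
  obtain ⟨X', hgX', halpha, hbv⟩ := (rename_binders hinf hreg).1 (trep X) hX
    (qAllv (trep Y) ∪ {y}) hbad
  obtain ⟨Z, hZ⟩ := qsubst_total.1 X' (trep Y) y ys fun w hw =>
    ⟨fun hc => hbv w hw (Or.inr hc), fun hc => hbv w hw (Or.inl hc)⟩
  refine ⟨tmk Z, X', Z, ?_, rfl, hZ⟩
  rw [← tmk_trep X]
  exact (Quot.sound halpha).symm

theorem subst_good_db (hinf : Cardinal.aleph0 ≤ Cardinal.mk var)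
    (hreg : (Cardinal.mk var).IsRegular) {X Y : Term var varsort index bindex opsym}
    (hX : good X) (hY : good Y) (y : var) (ys : varsort) :
    good (subst X Y y ys) ∧
      db (trep (subst X Y y ys)) [] = dsubst ys y (db (trep Y) []) (db (trep X) []) := by
  have hex := substRel_exists hinf hreg hX hY y ys
  have : subst X Y y ys = hex.choose := by
    rw [subst, dif_pos hex]
  rw [this]
  exact substRel_spec hinf hreg hX hY y ys hex.choose hex.choose_spec

/-- substitution of the same variable (at the same varsort)
distributes over itself. -/
theorem subst_subst_same (hinf : Cardinal.aleph0 ≤ Cardinal.mk var)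
    (hreg : (Cardinal.mk var).IsRegular)
    (X Y₁ Y₂ : Term var varsort index bindex opsym) (hX : good X) (hY₁ : good Y₁) (hY₂ : good Y₂)
    (y : var) (ys : varsort) :
    subst (subst X Y₁ y ys) Y₂ y ys = subst X (subst Y₁ Y₂ y ys) y ys := by
  obtain ⟨hg1, hd1⟩ := subst_good_db hinf hreg hX hY₁ y ys
  obtain ⟨hg2, hd2⟩ := subst_good_db hinf hreg hg1 hY₂ y ys
  obtain ⟨hg3, hd3⟩ := subst_good_db hinf hreg hY₁ hY₂ y ys
  obtain ⟨hg4, hd4⟩ := subst_good_db hinf hreg hX hg3 y ys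
  refine term_eq_of_db hinf hreg hg2 hg4 ?_
  rw [hd2, hd1, hd4, hd3, dsubst_dsubst_same]


end Binding
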